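/- arXiv:1603.01230 — 4 statements merged into one kernel-verified Lean document; each statement's English description precedes it below -/
import Mathlib

section
/- For all x ∈ ℝⁿ, t > 0, 1 < r < ∞, and every locally r-integrable function f, the L^r average of the centered Hardy–Littlewood maximal function Mf over the ball B(x,t) is bounded by a constant (depending only on n and r) times the sum of the L^r average of |f| over B(x,2t) and the value at x of the uncentered maximal function applied to the function z ↦ average of |f| over B(z,t). -/
open MeasureTheory Metric Set ENNReal
open scoped NNReal

noncomputable section

abbrev Rn (n : ℕ) := EuclideanSpace ℝ (Fin n)

variable {n : ℕ}

/-- `L^r` average of an `ℝ≥0∞`-valued function over a ball. -/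
def ballAvg (r : ℝ) (g : Rn n → ℝ≥0∞) (x : Rn n) (t : ℝ) : ℝ≥0∞ :=
  ((volume (ball x t))⁻¹ * ∫⁻ y in ball x t, (g y) ^ r) ^ (1 / r)

/-- Centered Hardy–Littlewood maximal operator. -/
def maximal (f : Rn n → ℝ) (x : Rn n) : ℝ≥0∞ :=
  ⨆ (τ : ℝ) (_ : 0 < τ), (volume (ball x τ))⁻¹ * ∫⁻ y in ball x τ, (‖f y‖₊ : ℝ≥0∞)

/-- Uncentered Hardy–Littlewood maximal operator of an `ℝ≥0∞`-valued function. -/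
def umaximal (g : Rn n → ℝ≥0∞) (x : Rn n) : ℝ≥0∞ :=
  ⨆ (z : Rn n) (τ : ℝ) (_ : 0 < τ) (_ : x ∈ ball z τ),
    (volume (ball z τ))⁻¹ * ∫⁻ y in ball z τ, g y

/-- Conical square functional `A_r` (with the `dy dt / t^{n+1}` measure). -/
def conical (r : ℝ) (G : Rn n → ℝ → ℝ≥0∞) (x : Rn n) : ℝ≥0∞ :=
  (∫⁻ t in Ioi (0 : ℝ),
      (∫⁻ y in ball x t, (G y t) ^ r) * ENNReal.ofReal (t ^ (-(n : ℝ) - 1))) ^ (1 / r)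

/-- Tent space quasinorm `‖G‖_{T^q_r} = ‖A_r G‖_{L^q}`. -/
def tentNorm (q r : ℝ) (G : Rn n → ℝ → ℝ≥0∞) : ℝ≥0∞ :=
  (∫⁻ x, (conical r G x) ^ q) ^ (1 / q)

def enn (F : Rn n → ℝ → ℝ) : Rn n → ℝ → ℝ≥0∞ := fun y t => (‖F y t‖₊ : ℝ≥0∞)

/-- Vertical square functional `V_r`. -/
def vertical (r : ℝ) (G : Rn n → ℝ → ℝ≥0∞) (x : Rn n) : ℝ≥0∞ :=
  (∫⁻ t in Ioi (0 : ℝ), (G x t) ^ r * ENNReal.ofReal t⁻¹) ^ (1 / r)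

/-- Tent over the ball `B(x₀,ρ)`: points `(x,t)` with `t ≤ dist(x, ℝⁿ ∖ B)`. -/
def tent (x₀ : Rn n) (ρ : ℝ) : Set (Rn n × ℝ) :=
  {p | 0 < p.2 ∧ p.2 ≤ infDist p.1 (ball x₀ ρ)ᶜ}

/-- `∬_S |M(x,t)|^r dx dt/t`. -/
def tentInt (r : ℝ) (M : Rn n → ℝ → ℝ) (S : Set (Rn n × ℝ)) : ℝ≥0∞ :=
  ∫⁻ t in Ioi (0 : ℝ),
    (∫⁻ y, S.indicator (fun p => (‖M p.1 p.2‖₊ : ℝ≥0∞) ^ r) (y, t)) * ENNReal.ofReal t⁻¹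

/-- Maximal truncated singular integral `T_*`. -/
def tstar (K : Rn n → Rn n → ℝ) (f : Rn n → ℝ) (x : Rn n) : ℝ≥0∞ :=
  ⨆ (ε : ℝ) (_ : 0 < ε), (‖∫ y in {y | ε < dist x y}, K x y * f y‖₊ : ℝ≥0∞)

def rieszGamma (n : ℕ) (α : ℝ) : ℝ :=
  Real.pi ^ ((n : ℝ) / 2) * 2 ^ α * Real.Gamma (α / 2) / Real.Gamma (((n : ℝ) - α) / 2)

/-- Riesz potential of an `ℝ≥0∞`-valued function. -/
def rieszPot (α : ℝ) (g : Rn n → ℝ≥0∞) (x : Rn n) : ℝ≥0∞ :=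
  (ENNReal.ofReal (rieszGamma n α))⁻¹ * ∫⁻ z, g z * ENNReal.ofReal (dist x z ^ (α - n))

/-- Fractional maximal function `M_α f(x) = sup_τ |B(x,τ)|^{α/n} ⨍_{B(x,τ)} |f|`. -/
def fracMax (α : ℝ) (f : Rn n → ℝ) (x : Rn n) : ℝ≥0∞ :=
  ⨆ (τ : ℝ) (_ : 0 < τ),
    (volume (ball x τ)) ^ (α / n) *
      ((volume (ball x τ))⁻¹ * ∫⁻ y in ball x τ, (‖f y‖₊ : ℝ≥0∞))

/-- `T^q_r` atom. -/
def IsTentAtom (q r : ℝ) (A : Rn n → ℝ → ℝ) : Prop :=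
  ∃ (x₀ : Rn n) (ρ : ℝ), 0 < ρ ∧ (∀ y t, A y t ≠ 0 → (y, t) ∈ tent x₀ ρ) ∧
    (tentInt r A Set.univ) ^ (1 / r) ≤ (volume (ball x₀ ρ)) ^ (1 / r - 1 / q)

/-- `𝔗^q_r` atom: a `T^q_r` atom with vanishing mean in `x` for a.e. `t > 0`. -/
def IsFrakAtom (q r : ℝ) (A : Rn n → ℝ → ℝ) : Prop :=
  IsTentAtom q r A ∧ ∀ᵐ t ∂(volume.restrict (Ioi (0 : ℝ))), (∫ x, A x t) = 0

/-- `𝔗^q_r` quasinorm via atomic decompositions into `𝔗^q_r` atoms. -/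
def frakNorm (q r : ℝ) (F : Rn n → ℝ → ℝ) : ℝ≥0∞ :=
  ⨅ (d : {p : (ℕ → ℝ) × (ℕ → Rn n → ℝ → ℝ) //
      (∀ i, IsFrakAtom q r (p.2 i)) ∧ ∀ y t, F y t = ∑' i, p.1 i * p.2 i y t}),
    ENNReal.ofReal ((∑' i, |d.1.1 i| ^ q) ^ (1 / q))

/-- Slice-space quasinorm `‖f‖_{(E^p_r)_t}`. -/
def sliceNorm (p r t : ℝ) (f : Rn n → ℝ) : ℝ≥0∞ :=
  (∫⁻ x, ((volume (ball x t))⁻¹ * ∫⁻ y in ball x t, (‖f y‖₊ : ℝ≥0∞) ^ r) ^ (p / r)) ^ (1 / p)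

def iMap (t : ℝ) (f : Rn n → ℝ) : Rn n → ℝ → ℝ :=
  fun x s => if s ∈ Icc t (Real.exp 1 * t) then f x else 0

def piMap (t : ℝ) (G : Rn n → ℝ → ℝ) : Rn n → ℝ :=
  fun x => ∫ s in Ioc t (Real.exp 1 * t), G x s / s

lemma ball_eq_univ_of_n0 (y : Rn 0) {s : ℝ} (hs : 0 < s) : ball y s = univ := by
  apply eq_univ_iff_forall.2
  intro z
  simp [mem_ball, Subsingleton.elim z y, hs]

lemma volume_ball_eq (x : Rn n) {s : ℝ} (hs : 0 < s) :
    volume (ball x s) = ENNReal.ofReal (s ^ n) * volume (ball (0 : Rn n) 1) := by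
  rcases Nat.eq_zero_or_pos n with h | h
  · subst h
    rw [ball_eq_univ_of_n0 x hs, ball_eq_univ_of_n0 0 one_pos]
    simp
  · haveI : Nonempty (Fin n) := ⟨⟨0, h⟩⟩
    rw [Measure.addHaar_ball volume x hs.le, finrank_euclideanSpace_fin]

lemma volume_closedBall_eq (x : Rn n) {s : ℝ} (hs : 0 < s) :
    volume (closedBall x s) = ENNReal.ofReal (s ^ n) * volume (ball (0 : Rn n) 1) := by
  rcases Nat.eq_zero_or_pos n with h | h
  · subst h
    have : closedBall x s = univ := eq_univ_iff_forall.2 fun z => by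
      simp [mem_closedBall, Subsingleton.elim z x, hs.le]
    rw [this, ball_eq_univ_of_n0 0 one_pos]; simp
  · haveI : Nonempty (Fin n) := ⟨⟨0, h⟩⟩
    rw [Measure.addHaar_closedBall_eq_addHaar_ball,
      Measure.addHaar_ball volume x hs.le, finrank_euclideanSpace_fin]

lemma volume_ball_pos (x : Rn n) {s : ℝ} (hs : 0 < s) : 0 < volume (ball x s) :=
  measure_ball_pos _ _ hs

lemma volume_ball_ne_top (x : Rn n) (s : ℝ) : volume (ball x s) ≠ ∞ :=
  (measure_ball_lt_top).ne

/-- scaling comparison between balls of comparable radii at different centers -/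
lemma volume_ball_le_mul (x x' : Rn n) {s s' : ℝ} (hs : 0 < s) (h : s' ≤ c * s) (hc : 0 < c) :
    volume (ball x' s') ≤ ENNReal.ofReal (c ^ n) * volume (ball x s) := by
  rcases le_or_gt s' 0 with h' | h'
  · simp [ball_eq_empty.2 h']
  · rw [volume_ball_eq x' h', volume_ball_eq x hs, ← mul_assoc,
      ← ENNReal.ofReal_mul (by positivity)]
    gcongr
    calc s' ^ n ≤ (c * s) ^ n := by gcongr
    _ = c ^ n * s ^ n := mul_pow _ _ _

lemma volume_closedBall_le_mul (x x' : Rn n) {s s' : ℝ} (hs : 0 < s) (h : s' ≤ c * s)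
    (hc : 0 < c) :
    volume (closedBall x' s') ≤ ENNReal.ofReal (c ^ n) * volume (ball x s) := by
  rcases le_or_gt s' 0 with h' | h'
  · rcases lt_or_eq_of_le h' with h'' | h''
    · simp [closedBall_eq_empty.2 h'']
    · subst h''
      calc volume (closedBall x' 0) ≤ volume (closedBall x' (c * s)) :=
            measure_mono (closedBall_subset_closedBall (by positivity))
      _ = ENNReal.ofReal ((c * s) ^ n) * volume (ball (0 : Rn n) 1) :=
            volume_closedBall_eq _ (by positivity)
      _ = ENNReal.ofReal (c ^ n) * volume (ball x s) := by
            rw [volume_ball_eq x hs, ← mul_assoc, ← ENNReal.ofReal_mul (by positivity), mul_pow]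
  · rw [volume_closedBall_eq x' h', volume_ball_eq x hs, ← mul_assoc,
      ← ENNReal.ofReal_mul (by positivity)]
    gcongr
    calc s' ^ n ≤ (c * s) ^ n := by gcongr
    _ = c ^ n * s ^ n := mul_pow _ _ _

/-- average of `g` over `ball x s` -/
def avg (g : Rn n → ℝ≥0∞) (x : Rn n) (s : ℝ) : ℝ≥0∞ :=
  (volume (ball x s))⁻¹ * ∫⁻ y in ball x s, g y

lemma avg_mono {g g' : Rn n → ℝ≥0∞} (h : ∀ y, g y ≤ g' y) (x : Rn n) (s : ℝ) :
    avg g x s ≤ avg g' x s :=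
  mul_le_mul_right (lintegral_mono fun y => h y) _

lemma avg_const_le (x : Rn n) {s : ℝ} (c : ℝ≥0∞) : avg (fun _ => c) x s ≤ c := by
  unfold avg
  rw [setLIntegral_const]
  rcases eq_or_ne (volume (ball x s)) 0 with h | h
  · simp [h]
  · rw [mul_comm c, ← mul_assoc, ENNReal.inv_mul_cancel h (volume_ball_ne_top x s), one_mul]

lemma avg_add_le (g g' : Rn n → ℝ≥0∞) (hg : Measurable g) (x : Rn n) (s : ℝ) :
    avg (fun y => g y + g' y) x s ≤ avg g x s + avg g' x s := by
  unfold avg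
  rw [lintegral_add_left hg, mul_add]

lemma avg_le_scale {g : Rn n → ℝ≥0∞} {x : Rn n} {τ s : ℝ} (hτ : 0 < τ) (h1 : τ ≤ s)
    (h2 : s ≤ 2 * τ) : avg g x τ ≤ ENNReal.ofReal (2 ^ n) * avg g x s := by
  have hV0 : volume (ball x s) ≠ 0 := (volume_ball_pos x (lt_of_lt_of_le hτ h1)).ne'
  have hVt : volume (ball x s) ≠ ∞ := volume_ball_ne_top x s
  have hVτ0 : volume (ball x τ) ≠ 0 := (volume_ball_pos x hτ).ne'
  have hVτt : volume (ball x τ) ≠ ∞ := volume_ball_ne_top x τ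
  have key : (∫⁻ y in ball x τ, g y) ≤ volume (ball x s) * avg g x s := by
    rw [avg, ← mul_assoc, ENNReal.mul_inv_cancel hV0 hVt, one_mul]
    exact lintegral_mono_set (ball_subset_ball h1)
  calc avg g x τ ≤ (volume (ball x τ))⁻¹ * (volume (ball x s) * avg g x s) :=
        mul_le_mul_right key _
  _ ≤ (volume (ball x τ))⁻¹ * ((ENNReal.ofReal (2 ^ n) * volume (ball x τ)) * avg g x s) := by
        gcongr
        exact volume_ball_le_mul x x hτ h2 two_pos
  _ = ((volume (ball x τ))⁻¹ * volume (ball x τ)) * (ENNReal.ofReal (2 ^ n) * avg g x s) := by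
        ring
  _ = ENNReal.ofReal (2 ^ n) * avg g x s := by
        rw [ENNReal.inv_mul_cancel hVτ0 hVτt, one_mul]

/-- truncated rational maximal operator -/
def MqT (R : ℝ) (g : Rn n → ℝ≥0∞) (x : Rn n) : ℝ≥0∞ :=
  ⨆ (q : ℚ) (_ : 0 < (q : ℝ)) (_ : (q : ℝ) ≤ R), avg g x q

/-- rational maximal operator -/
def Mq (g : Rn n → ℝ≥0∞) (x : Rn n) : ℝ≥0∞ :=
  ⨆ (q : ℚ) (_ : 0 < (q : ℝ)), avg g x q

lemma avg_le_Mq {g : Rn n → ℝ≥0∞} {x : Rn n} {q : ℚ} (hq : 0 < (q : ℝ)) :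
    avg g x q ≤ Mq g x := by
  unfold Mq
  exact le_iSup₂ (f := fun (q : ℚ) (_ : 0 < (q:ℝ)) => avg g x (q:ℝ)) q hq

lemma avg_le_MqT {g : Rn n → ℝ≥0∞} {x : Rn n} {R : ℝ} {q : ℚ} (hq : 0 < (q : ℝ))
    (hqR : (q : ℝ) ≤ R) : avg g x q ≤ MqT R g x := by
  unfold MqT
  exact le_iSup₂_of_le q hq (le_iSup_of_le hqR le_rfl)

lemma avg_le_ofReal_mul_Mq {g : Rn n → ℝ≥0∞} {x : Rn n} {τ : ℝ} (hτ : 0 < τ) :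
    avg g x τ ≤ ENNReal.ofReal (2 ^ n) * Mq g x := by
  obtain ⟨q, hq1, hq2⟩ := exists_rat_btwn (show τ < 2 * τ by linarith)
  calc avg g x τ ≤ ENNReal.ofReal (2 ^ n) * avg g x q := avg_le_scale hτ hq1.le hq2.le
  _ ≤ _ := mul_le_mul_right (avg_le_Mq (lt_trans hτ hq1)) _

lemma MqT_le_Mq (R : ℝ) (g : Rn n → ℝ≥0∞) (x : Rn n) : MqT R g x ≤ Mq g x := by
  refine iSup₂_le fun q hq => iSup_le fun _ => avg_le_Mq hq

lemma MqT_mono {R R' : ℝ} (h : R ≤ R') (g : Rn n → ℝ≥0∞) (x : Rn n) :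
    MqT R g x ≤ MqT R' g x :=
  iSup₂_le fun q hq => iSup_le fun hqR => avg_le_MqT hq (hqR.trans h)

lemma Mq_eq_iSup_MqT (g : Rn n → ℝ≥0∞) (x : Rn n) : Mq g x = ⨆ k : ℕ, MqT k g x := by
  apply le_antisymm
  · refine iSup₂_le fun q hq => ?_
    refine le_iSup_of_le ⌈(q:ℝ)⌉₊ (avg_le_MqT hq (Nat.le_ceil _))
  · exact iSup_le fun k => MqT_le_Mq _ _ _

lemma measurable_setLintegral_ball {g : Rn n → ℝ≥0∞} (hg : Measurable g) (s : ℝ) :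
    Measurable fun x : Rn n => ∫⁻ y in ball x s, g y := by
  have h : ∀ x : Rn n, (∫⁻ y in ball x s, g y) = ∫⁻ y, (ball x s).indicator g y := by
    intro x
    rw [lintegral_indicator measurableSet_ball]
  simp_rw [h]
  have hm : Measurable fun p : Rn n × Rn n => (ball p.1 s).indicator g p.2 := by
    have : (fun p : Rn n × Rn n => (ball p.1 s).indicator g p.2) =
        fun p : Rn n × Rn n => if dist p.2 p.1 < s then g p.2 else 0 := by
      ext p
      simp [Set.indicator, mem_ball]
    rw [this]
    exact Measurable.ite
      (measurableSet_lt (measurable_dist.comp (measurable_snd.prodMk measurable_fst))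
        measurable_const) (hg.comp measurable_snd) measurable_const
  exact hm.lintegral_prod_right'

lemma measurable_avg {g : Rn n → ℝ≥0∞} (hg : Measurable g) (s : ℝ) :
    Measurable fun x : Rn n => avg g x s := by
  rcases le_or_gt s 0 with h | h
  · have : ∀ x : Rn n, avg g x s = 0 := by
      intro x; unfold avg; simp [ball_eq_empty.2 h]
    simp_rw [this]; exact measurable_const
  · have : ∀ x : Rn n, avg g x s =
        (ENNReal.ofReal (s ^ n) * volume (ball (0 : Rn n) 1))⁻¹ * ∫⁻ y in ball x s, g y := by
      intro x; unfold avg; rw [volume_ball_eq x h]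
    simp_rw [this]
    exact (measurable_setLintegral_ball hg s).const_mul _

lemma measurable_MqT {g : Rn n → ℝ≥0∞} (hg : Measurable g) (R : ℝ) :
    Measurable (MqT R g) := by
  unfold MqT
  refine Measurable.iSup fun q => Measurable.iSup fun hq => Measurable.iSup fun hqR => ?_
  exact measurable_avg hg q

lemma measurable_Mq {g : Rn n → ℝ≥0∞} (hg : Measurable g) : Measurable (Mq g) := by
  unfold Mq
  exact Measurable.iSup fun q => Measurable.iSup fun hq => measurable_avg hg q

lemma weak_type (g : Rn n → ℝ≥0∞) (R : ℝ) {c : ℝ≥0∞} (hc0 : c ≠ 0) :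
    volume {x : Rn n | c < MqT R g x} ≤ ENNReal.ofReal (4 ^ n) * c⁻¹ * ∫⁻ y, g y := by
  rcases eq_or_ne c ∞ with rfl | hctop
  · simp
  set S := {x : Rn n | c < MqT R g x} with hS
  have H : ∀ a : S, ∃ s : ℝ, 0 < s ∧ s ≤ R ∧
      volume (ball (a : Rn n) s) ≤ c⁻¹ * ∫⁻ y in ball (a : Rn n) s, g y := by
    rintro ⟨x, hx⟩
    simp only [hS, mem_setOf_eq, MqT, lt_iSup_iff] at hx
    obtain ⟨q, hq, hqR, havg⟩ := hx
    have hV0 : volume (ball x (q : ℝ)) ≠ 0 := (volume_ball_pos x hq).ne'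
    have hVt : volume (ball x (q : ℝ)) ≠ ∞ := volume_ball_ne_top x _
    refine ⟨q, hq, hqR, ?_⟩
    have h1 : c * volume (ball x (q : ℝ)) ≤ ∫⁻ y in ball x (q : ℝ), g y := by
      calc c * volume (ball x (q : ℝ)) ≤ avg g x q * volume (ball x (q : ℝ)) :=
            mul_le_mul_left havg.le _
      _ = (∫⁻ y in ball x (q : ℝ), g y) * ((volume (ball x (q:ℝ)))⁻¹ * volume (ball x (q:ℝ))) := by
            rw [avg]; ring
      _ = _ := by rw [ENNReal.inv_mul_cancel hV0 hVt, mul_one]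
    calc volume (ball x (q : ℝ)) = c⁻¹ * (c * volume (ball x (q : ℝ))) := by
          rw [← mul_assoc, ENNReal.inv_mul_cancel hc0 hctop, one_mul]
    _ ≤ _ := mul_le_mul_right h1 _
  choose τ hτ0 hτR hτ using H
  obtain ⟨u, -, hdisj, hcov⟩ := Vitali.exists_disjoint_subfamily_covering_enlargement_closedBall
    (univ : Set S) (fun a => (a : Rn n)) τ R (fun a _ => hτR a) 4 (by norm_num)
  have hucnt : u.Countable := by
    apply hdisj.countable_of_nonempty_interior
    intro a _
    exact ⟨(a : Rn n), interior_maximal ball_subset_closedBall isOpen_ball (mem_ball_self (hτ0 a))⟩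
  have hdisj' : u.PairwiseDisjoint fun b : S => ball (b : Rn n) (τ b) :=
    hdisj.mono fun b => ball_subset_closedBall
  have hSsub : S ⊆ ⋃ b ∈ u, closedBall (b : Rn n) (4 * τ b) := by
    intro x hx
    obtain ⟨b, hbu, hsub⟩ := hcov ⟨x, hx⟩ (mem_univ _)
    exact mem_biUnion hbu (hsub (mem_closedBall_self (hτ0 _).le))
  calc volume S ≤ volume (⋃ b ∈ u, closedBall (b : Rn n) (4 * τ b)) := measure_mono hSsub
  _ ≤ ∑' b : u, volume (closedBall (b : Rn n) (4 * τ b)) := measure_biUnion_le volume hucnt _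
  _ ≤ ∑' b : u, ENNReal.ofReal (4 ^ n) * (c⁻¹ * ∫⁻ y in ball ((b : S) : Rn n) (τ b), g y) := by
      refine ENNReal.tsum_le_tsum fun b => ?_
      calc volume (closedBall ((b : S) : Rn n) (4 * τ b))
          ≤ ENNReal.ofReal (4 ^ n) * volume (ball ((b : S) : Rn n) (τ b)) :=
            volume_closedBall_le_mul _ _ (hτ0 _) le_rfl four_pos
      _ ≤ _ := mul_le_mul_right (hτ _) _
  _ = ENNReal.ofReal (4 ^ n) * c⁻¹ * ∑' b : u, ∫⁻ y in ball ((b : S) : Rn n) (τ b), g y := by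
      rw [ENNReal.tsum_mul_left, ENNReal.tsum_mul_left, mul_assoc]
  _ ≤ ENNReal.ofReal (4 ^ n) * c⁻¹ * ∫⁻ y, g y := by
      gcongr
      rw [← lintegral_biUnion hucnt (fun b _ => measurableSet_ball) hdisj']
      exact lintegral_mono' Measure.restrict_le_self le_rfl

lemma layercake {F : Rn n → ℝ≥0∞} (hF : Measurable F) {p : ℝ} (hp : 1 < p) :
    ∫⁻ x, F x ^ p = ENNReal.ofReal p *
      ∫⁻ s in Ioi (0 : ℝ), volume {x : Rn n | ENNReal.ofReal s < F x} *
        ENNReal.ofReal (s ^ (p - 1)) := by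
  have hp0 : 0 < p := by linarith
  by_cases hA : volume {x : Rn n | F x = ∞} = 0
  · have hae : ∀ᵐ x : Rn n, F x ≠ ∞ := by
      rw [ae_iff]
      simpa using hA
    have h1 : ∫⁻ x, F x ^ p = ∫⁻ x, ENNReal.ofReal ((F x).toReal ^ p) := by
      apply lintegral_congr_ae
      filter_upwards [hae] with x hx
      rw [← ENNReal.ofReal_rpow_of_nonneg ENNReal.toReal_nonneg hp0.le,
        ENNReal.ofReal_toReal hx]
    rw [h1, lintegral_rpow_eq_lintegral_meas_lt_mul volume
      (ae_of_all _ fun x => ENNReal.toReal_nonneg) hF.ennreal_toReal.aemeasurable hp0]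
    congr 1
    apply lintegral_congr_ae
    filter_upwards [self_mem_ae_restrict measurableSet_Ioi] with s hs
    congr 1
    apply measure_congr
    filter_upwards [hae] with a ha
    simp only [eq_iff_iff, mem_setOf_eq]
    exact (ENNReal.ofReal_lt_iff_lt_toReal (le_of_lt hs) ha).symm
  · have hL : ∫⁻ x, F x ^ p = ∞ := by
      have hsub : ∫⁻ x in {x : Rn n | F x = ∞}, (∞ : ℝ≥0∞) ≤ ∫⁻ x, F x ^ p := by
        calc ∫⁻ x in {x : Rn n | F x = ∞}, (∞ : ℝ≥0∞)
            = ∫⁻ x in {x : Rn n | F x = ∞}, F x ^ p := by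
              apply setLIntegral_congr_fun (hF (measurableSet_singleton ∞))
              exact fun x hx => by rw [show F x = ∞ from hx, ENNReal.top_rpow_of_pos hp0]
        _ ≤ _ := lintegral_mono' Measure.restrict_le_self le_rfl
      rw [setLIntegral_const, ENNReal.top_mul hA] at hsub
      exact top_le_iff.mp hsub
    rw [hL]
    have hR : ∫⁻ s in Ioi (0 : ℝ), volume {x : Rn n | ENNReal.ofReal s < F x} *
        ENNReal.ofReal (s ^ (p - 1)) = ∞ := by
      have hsub : ∫⁻ s in Ioi (1 : ℝ), volume {x : Rn n | F x = ∞} ≤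
          ∫⁻ s in Ioi (0 : ℝ), volume {x : Rn n | ENNReal.ofReal s < F x} *
            ENNReal.ofReal (s ^ (p - 1)) := by
        refine le_trans ?_ (lintegral_mono' (Measure.restrict_mono (Ioi_subset_Ioi one_pos.le)
          le_rfl) le_rfl)
        apply setLIntegral_mono' measurableSet_Ioi
        intro s hs
        calc volume {x : Rn n | F x = ∞}
            = volume {x : Rn n | F x = ∞} * 1 := (mul_one _).symm
        _ ≤ volume {x : Rn n | ENNReal.ofReal s < F x} * ENNReal.ofReal (s ^ (p - 1)) := by
            gcongr
            · intro hx; rw [hx]; exact ENNReal.ofReal_lt_top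
            · rw [show (1 : ℝ≥0∞) = ENNReal.ofReal 1 by simp]
              apply ENNReal.ofReal_le_ofReal
              calc (1:ℝ) = 1 ^ (p-1) := (Real.one_rpow _).symm
              _ ≤ s ^ (p - 1) := Real.rpow_le_rpow one_pos.le (le_of_lt hs) (by linarith)
      rw [lintegral_const, Measure.restrict_apply MeasurableSet.univ, univ_inter,
        Real.volume_Ioi, ENNReal.mul_top hA] at hsub
      exact top_le_iff.mp hsub
    rw [hR, ENNReal.mul_top (by simp [hp0, hp0.ne'])]

lemma inner_rpow_integral {a : ℝ} (ha : 0 < a) {r : ℝ} (hr : 1 < r) :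
    ∫⁻ s in Ioo (0 : ℝ) a, ENNReal.ofReal (s ^ (r - 2)) =
      ENNReal.ofReal (a ^ (r - 1) / (r - 1)) := by
  have hint : IntervalIntegrable (fun s : ℝ => s ^ (r - 2)) volume 0 a :=
    intervalIntegral.intervalIntegrable_rpow' (by linarith)
  have hval : ∫ s in (0:ℝ)..a, s ^ (r - 2) = a ^ (r - 1) / (r - 1) := by
    rw [integral_rpow (Or.inl (by linarith))]
    have h1 : r - 2 + 1 = r - 1 := by ring
    rw [h1, Real.zero_rpow (by linarith : r - 1 ≠ 0), sub_zero]
  rw [Measure.restrict_congr_set Ioo_ae_eq_Ioc]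
  rw [← ofReal_integral_eq_lintegral_ofReal
    ((intervalIntegrable_iff_integrableOn_Ioc_of_le ha.le).mp hint)
    (by filter_upwards [self_mem_ae_restrict measurableSet_Ioc] with s hs using
      Real.rpow_nonneg hs.1.le _)]
  rw [← intervalIntegral.integral_of_le ha.le, hval]

lemma MqT_le_add_const {g g' : Rn n → ℝ≥0∞} (hg' : Measurable g') {c : ℝ≥0∞}
    (h : ∀ y, g y ≤ g' y + c) (R : ℝ) (x : Rn n) : MqT R g x ≤ MqT R g' x + c := by
  refine iSup₂_le fun q hq => iSup_le fun hqR => ?_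
  calc avg g x q ≤ avg (fun y => g' y + c) x q := avg_mono h x q
  _ ≤ avg g' x q + avg (fun _ => c) x q := avg_add_le _ _ hg' x q
  _ ≤ MqT R g' x + c := add_le_add (avg_le_MqT hq hqR) (avg_const_le x c)

lemma inner_bound {r : ℝ} (hr : 1 < r) (v : ℝ≥0∞) :
    ∫⁻ s in Ioi (0 : ℝ), ENNReal.ofReal (2 * s ^ (r - 2)) *
        (if ENNReal.ofReal (s / 2) < v then v else 0) ≤
      ENNReal.ofReal (2 ^ r / (r - 1)) * v ^ r := by
  rcases eq_or_ne v 0 with rfl | hv0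
  · simp
  rcases eq_or_ne v ∞ with rfl | hvt
  · have : (∞ : ℝ≥0∞) ^ r = ∞ := ENNReal.top_rpow_of_pos (by linarith)
    rw [this, ENNReal.mul_top]
    · exact le_top
    · simp only [ne_eq, ENNReal.ofReal_eq_zero, not_le]
      exact div_pos (Real.rpow_pos_of_pos two_pos r) (by linarith)
  set a := v.toReal with hadef
  have ha : 0 < a := ENNReal.toReal_pos hv0 hvt
  have hveq : v = ENNReal.ofReal a := (ENNReal.ofReal_toReal hvt).symm
  have key : ∫⁻ s in Ioi (0 : ℝ), ENNReal.ofReal (2 * s ^ (r - 2)) *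
      (if ENNReal.ofReal (s / 2) < v then v else 0) =
      ∫⁻ s in Ioo (0 : ℝ) (2 * a), ENNReal.ofReal (2 * s ^ (r - 2)) * v := by
    rw [show (∫⁻ s in Ioi (0 : ℝ), ENNReal.ofReal (2 * s ^ (r - 2)) *
        (if ENNReal.ofReal (s / 2) < v then v else 0)) = ∫⁻ s in Ioi (0 : ℝ),
        (Ioo (0:ℝ) (2*a)).indicator (fun s => ENNReal.ofReal (2 * s ^ (r - 2)) * v) s from ?_]
    · rw [lintegral_indicator measurableSet_Ioo, Measure.restrict_restrict measurableSet_Ioo,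
        inter_eq_self_of_subset_left Ioo_subset_Ioi_self]
    · apply setLIntegral_congr_fun measurableSet_Ioi
      intro s hs
      dsimp only
      have hcond : ENNReal.ofReal (s / 2) < v ↔ s < 2 * a := by
        rw [hveq, ENNReal.ofReal_lt_ofReal_iff ha]
        constructor <;> intro h <;> linarith
      by_cases h : s < 2 * a
      · rw [if_pos (hcond.mpr h), indicator_of_mem (by exact ⟨mem_Ioi.mp hs, h⟩)]
      · rw [if_neg (fun hc => h (hcond.mp hc)), indicator_of_notMem
          (fun hc => h hc.2), mul_zero]
  rw [key]
  have h2 : ∫⁻ s in Ioo (0 : ℝ) (2 * a), ENNReal.ofReal (2 * s ^ (r - 2)) * v =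
      (ENNReal.ofReal 2 * ENNReal.ofReal ((2 * a) ^ (r - 1) / (r - 1))) * v := by
    rw [lintegral_mul_const' v _ hvt]
    congr 1
    have : ∀ s : ℝ, ENNReal.ofReal (2 * s ^ (r - 2)) =
        ENNReal.ofReal 2 * ENNReal.ofReal (s ^ (r - 2)) := fun s =>
      ENNReal.ofReal_mul two_pos.le
    simp_rw [this]
    rw [lintegral_const_mul' _ _ ENNReal.ofReal_ne_top,
      inner_rpow_integral (by positivity) hr]
  rw [h2]
  apply le_of_eq
  have hvr : v ^ r = v * ENNReal.ofReal (a ^ (r - 1)) := by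
    rw [hveq, ENNReal.ofReal_rpow_of_pos ha, ← ENNReal.ofReal_mul ha.le]
    congr 1
    rw [show a * a ^ (r - 1) = a ^ (1:ℝ) * a ^ (r - 1) by rw [Real.rpow_one],
      ← Real.rpow_add ha]
    norm_num
  rw [hvr]
  have h2r : (2:ℝ) * 2 ^ (r - 1) = 2 ^ r := by
    have h := Real.rpow_add two_pos 1 (r - 1)
    rw [Real.rpow_one] at h
    rw [← h]; norm_num
  have hsc : ENNReal.ofReal 2 * ENNReal.ofReal ((2 * a) ^ (r - 1) / (r - 1)) =
      ENNReal.ofReal (2 ^ r / (r - 1)) * ENNReal.ofReal (a ^ (r - 1)) := by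
    rw [← ENNReal.ofReal_mul two_pos.le, ← ENNReal.ofReal_mul
      (div_nonneg (Real.rpow_pos_of_pos two_pos r).le (by linarith))]
    congr 1
    rw [Real.mul_rpow two_pos.le ha.le,
      show (2:ℝ) * (2 ^ (r-1) * a ^ (r-1) / (r-1)) = (2 * 2 ^ (r-1)) * a ^ (r-1) / (r-1) by ring,
      h2r]
    ring
  calc ENNReal.ofReal 2 * ENNReal.ofReal ((2 * a) ^ (r - 1) / (r - 1)) * v
      = (ENNReal.ofReal (2 ^ r / (r - 1)) * ENNReal.ofReal (a ^ (r - 1))) * v := by rw [hsc]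
  _ = ENNReal.ofReal (2 ^ r / (r - 1)) * (v * ENNReal.ofReal (a ^ (r - 1))) := by ring

lemma strong_type {r : ℝ} (hr : 1 < r) :
    ∃ C : ℝ≥0∞, C ≠ ∞ ∧ ∀ (g : Rn n → ℝ≥0∞), Measurable g → ∀ R : ℝ,
      ∫⁻ x, MqT R g x ^ r ≤ C * ∫⁻ x, g x ^ r := by
  refine ⟨ENNReal.ofReal r * ENNReal.ofReal (4 ^ n) * ENNReal.ofReal (2 ^ r / (r - 1)),
    ENNReal.mul_ne_top (ENNReal.mul_ne_top ENNReal.ofReal_ne_top ENNReal.ofReal_ne_top)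
      ENNReal.ofReal_ne_top, ?_⟩
  intro g hg R
  set gs : ℝ → Rn n → ℝ≥0∞ := fun s x => if ENNReal.ofReal (s / 2) < g x then g x else 0
    with hgsdef
  have hgs_meas : ∀ s, Measurable (gs s) := fun s =>
    Measurable.ite (measurableSet_lt measurable_const hg) hg measurable_const
  have hD : ∀ s : ℝ, 0 < s → volume {x : Rn n | ENNReal.ofReal s < MqT R g x} ≤
      ENNReal.ofReal (4 ^ n) * (ENNReal.ofReal (s / 2))⁻¹ * ∫⁻ x, gs s x := by
    intro s hs
    have hptwise : ∀ y, g y ≤ gs s y + ENNReal.ofReal (s / 2) := by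
      intro y
      by_cases h : ENNReal.ofReal (s / 2) < g y
      · simp only [hgsdef, if_pos h]
        exact le_self_add
      · simp only [hgsdef, if_neg h]
        rw [zero_add]
        exact not_lt.mp h
    have hsub : {x : Rn n | ENNReal.ofReal s < MqT R g x} ⊆
        {x : Rn n | ENNReal.ofReal (s / 2) < MqT R (gs s) x} := by
      intro x hx
      simp only [mem_setOf_eq] at hx ⊢
      by_contra hcon
      push_neg at hcon
      have : MqT R g x ≤ ENNReal.ofReal s := by
        calc MqT R g x ≤ MqT R (gs s) x + ENNReal.ofReal (s / 2) :=
              MqT_le_add_const (hgs_meas s) hptwise R x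
        _ ≤ ENNReal.ofReal (s / 2) + ENNReal.ofReal (s / 2) := add_le_add_left hcon _
        _ = ENNReal.ofReal s := by
              rw [← ENNReal.ofReal_add (by linarith) (by linarith)]
              norm_num
      exact absurd hx (not_lt.mpr this)
    calc volume {x : Rn n | ENNReal.ofReal s < MqT R g x}
        ≤ volume {x : Rn n | ENNReal.ofReal (s / 2) < MqT R (gs s) x} := measure_mono hsub
    _ ≤ _ := weak_type (gs s) R
          (by simp only [ne_eq, ENNReal.ofReal_eq_zero, not_le]; linarith)
  calc ∫⁻ x, MqT R g x ^ r
      = ENNReal.ofReal r * ∫⁻ s in Ioi (0:ℝ),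
          volume {x : Rn n | ENNReal.ofReal s < MqT R g x} * ENNReal.ofReal (s ^ (r-1)) :=
        layercake (measurable_MqT hg R) hr
  _ ≤ ENNReal.ofReal r * ∫⁻ s in Ioi (0:ℝ),
        (ENNReal.ofReal (4^n) * (ENNReal.ofReal (s/2))⁻¹ * ∫⁻ x, gs s x) *
          ENNReal.ofReal (s ^ (r-1)) := by
      apply mul_le_mul_right
      apply setLIntegral_mono' measurableSet_Ioi
      intro s hs
      exact mul_le_mul_left (hD s (mem_Ioi.mp hs)) _
  _ = ENNReal.ofReal r * (ENNReal.ofReal (4^n) *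
        ∫⁻ s in Ioi (0:ℝ), ENNReal.ofReal (2 * s ^ (r-2)) * ∫⁻ x, gs s x) := by
      congr 1
      rw [← lintegral_const_mul' _ _ ENNReal.ofReal_ne_top]
      apply setLIntegral_congr_fun measurableSet_Ioi
      intro s hs
      have hs0 : (0:ℝ) < s := mem_Ioi.mp hs
      have h1 : (ENNReal.ofReal (s/2))⁻¹ = ENNReal.ofReal ((s/2)⁻¹) :=
        (ENNReal.ofReal_inv_of_pos (by linarith)).symm
      have h2 : ((s/2):ℝ)⁻¹ * s ^ (r-1) = 2 * s ^ (r-2) := by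
        rw [show r - 1 = (r-2) + 1 by ring, Real.rpow_add_one hs0.ne']
        field_simp
      calc ENNReal.ofReal (4^n) * (ENNReal.ofReal (s/2))⁻¹ * (∫⁻ x, gs s x) *
            ENNReal.ofReal (s ^ (r-1))
          = ENNReal.ofReal (4^n) * (((ENNReal.ofReal (s/2))⁻¹ * ENNReal.ofReal (s ^ (r-1))) *
              ∫⁻ x, gs s x) := by ring
      _ = ENNReal.ofReal (4^n) * (ENNReal.ofReal (2 * s ^ (r-2)) * ∫⁻ x, gs s x) := by
            rw [h1, ← ENNReal.ofReal_mul (by positivity), h2]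
  _ = ENNReal.ofReal r * (ENNReal.ofReal (4^n) *
        ∫⁻ x, ∫⁻ s in Ioi (0:ℝ), ENNReal.ofReal (2 * s ^ (r-2)) * gs s x) := by
      congr 1
      congr 1
      have hrw : ∀ s : ℝ, ENNReal.ofReal (2 * s ^ (r-2)) * ∫⁻ x, gs s x =
          ∫⁻ x, ENNReal.ofReal (2 * s ^ (r-2)) * gs s x := fun s =>
        (lintegral_const_mul' _ _ ENNReal.ofReal_ne_top).symm
      simp_rw [hrw]
      apply lintegral_lintegral_swap
      apply Measurable.aemeasurable
      apply Measurable.mul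
      · exact ENNReal.measurable_ofReal.comp
          (measurable_const.mul (measurable_fst.pow measurable_const))
      · exact Measurable.ite
          (measurableSet_lt (ENNReal.measurable_ofReal.comp (measurable_fst.div_const 2))
            (hg.comp measurable_snd)) (hg.comp measurable_snd) measurable_const
  _ ≤ ENNReal.ofReal r * (ENNReal.ofReal (4^n) *
        ∫⁻ x, ENNReal.ofReal (2 ^ r / (r-1)) * g x ^ r) := by
      apply mul_le_mul_right
      apply mul_le_mul_right
      exact lintegral_mono fun x => inner_bound hr (g x)
  _ = ENNReal.ofReal r * ENNReal.ofReal (4^n) * ENNReal.ofReal (2 ^ r / (r-1)) *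
        ∫⁻ x, g x ^ r := by
      rw [lintegral_const_mul' _ _ ENNReal.ofReal_ne_top]
      ring

lemma iSup_rpow_nat {F : ℕ → ℝ≥0∞} {r : ℝ} (hr : 0 < r) : (⨆ k, F k) ^ r = ⨆ k, F k ^ r := by
  apply le_antisymm
  · have h : ∀ k, F k ≤ (⨆ k, F k ^ r) ^ (1/r) := by
      intro k
      calc F k = (F k ^ r) ^ (1/r) := by
            rw [← ENNReal.rpow_mul, mul_one_div_cancel hr.ne', ENNReal.rpow_one]
      _ ≤ _ := ENNReal.rpow_le_rpow (le_iSup (fun k => F k ^ r) k) (by positivity)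
    calc (⨆ k, F k) ^ r ≤ (((⨆ k, F k ^ r) ^ (1/r))) ^ r :=
          ENNReal.rpow_le_rpow (iSup_le h) hr.le
    _ = ⨆ k, F k ^ r := by
          rw [← ENNReal.rpow_mul, one_div_mul_cancel hr.ne', ENNReal.rpow_one]
  · exact iSup_le fun k => ENNReal.rpow_le_rpow (le_iSup F k) hr.le

lemma strong_type_Mq {r : ℝ} (hr : 1 < r) :
    ∃ C : ℝ≥0∞, C ≠ ∞ ∧ ∀ (g : Rn n → ℝ≥0∞), Measurable g →
      ∫⁻ x, Mq g x ^ r ≤ C * ∫⁻ x, g x ^ r := by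
  obtain ⟨C, hC, hbound⟩ := strong_type (n := n) hr
  refine ⟨C, hC, fun g hg => ?_⟩
  have h1 : ∀ x : Rn n, Mq g x ^ r = ⨆ k : ℕ, MqT (k : ℝ) g x ^ r := by
    intro x
    rw [Mq_eq_iSup_MqT, iSup_rpow_nat (by linarith)]
  simp_rw [h1]
  rw [lintegral_iSup (fun k => (measurable_MqT hg (k:ℝ)).pow measurable_const)
    (fun i j hij => fun x => ENNReal.rpow_le_rpow
      (MqT_mono (by exact_mod_cast hij) g x) (by linarith))]
  exact iSup_le fun k => hbound g hg k

lemma lintegral_ball_le_lintegral_avg (g : Rn n → ℝ≥0∞) (hg : Measurable g) {t : ℝ}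
    (ht : 0 < t) (y : Rn n) (τ : ℝ) :
    ∫⁻ w in ball y τ, g w ≤ ∫⁻ z in ball y (τ + t), avg g z t := by
  have hVt : ∀ z : Rn n, volume (ball z t) =
      ENNReal.ofReal (t ^ n) * volume (ball (0 : Rn n) 1) := fun z => volume_ball_eq z ht
  set V := ENNReal.ofReal (t ^ n) * volume (ball (0 : Rn n) 1) with hV
  have hV0 : V ≠ 0 := by rw [← hVt y]; exact (volume_ball_pos y ht).ne'
  have hVtop : V ≠ ∞ := by rw [← hVt y]; exact volume_ball_ne_top y t
  have havg : ∀ z : Rn n, avg g z t = V⁻¹ * ∫⁻ w in ball z t, g w := fun z => by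
    rw [avg, hVt z]
  calc ∫⁻ w in ball y τ, g w
      = V⁻¹ * ((∫⁻ w in ball y τ, g w) * V) := by
        rw [mul_comm V⁻¹, mul_assoc, ENNReal.mul_inv_cancel hV0 hVtop, mul_one]
  _ = V⁻¹ * ∫⁻ w in ball y τ, g w * V := by rw [lintegral_mul_const' _ _ hVtop]
  _ = V⁻¹ * ∫⁻ w in ball y τ, g w * volume (ball w t ∩ ball y (τ + t)) := by
        congr 1
        apply setLIntegral_congr_fun measurableSet_ball
        intro w hw
        dsimp only
        rw [inter_eq_self_of_subset_left (ball_subset_ball' (by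
          rw [mem_ball] at hw; linarith))]
        rw [hVt w]
  _ ≤ V⁻¹ * ∫⁻ w, g w * volume (ball w t ∩ ball y (τ + t)) := by
        apply mul_le_mul_right
        exact lintegral_mono' Measure.restrict_le_self le_rfl
  _ = V⁻¹ * ∫⁻ w, ∫⁻ z in ball y (τ + t), (ball z t).indicator g w := by
        congr 1
        apply lintegral_congr
        intro w
        have h1 : ∀ z : Rn n, (ball z t).indicator g w =
            (ball w t).indicator (fun _ => g w) z := by
          intro z
          simp only [Set.indicator, mem_ball, dist_comm w z]
        simp_rw [h1]
        rw [lintegral_indicator measurableSet_ball,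
          Measure.restrict_restrict measurableSet_ball, setLIntegral_const]
  _ = V⁻¹ * ∫⁻ z in ball y (τ + t), ∫⁻ w, (ball z t).indicator g w := by
        congr 1
        symm
        apply lintegral_lintegral_swap
        apply Measurable.aemeasurable
        have : (Function.uncurry fun (z : Rn n) (w : Rn n) => (ball z t).indicator g w) =
            fun p : Rn n × Rn n => if dist p.2 p.1 < t then g p.2 else 0 := by
          ext p
          simp [Function.uncurry, Set.indicator, mem_ball]
        rw [this]
        exact Measurable.ite
          (measurableSet_lt (measurable_dist.comp (measurable_snd.prodMk measurable_fst))
            measurable_const) (hg.comp measurable_snd) measurable_const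
  _ = ∫⁻ z in ball y (τ + t), avg g z t := by
        rw [← lintegral_const_mul' _ _ (ENNReal.inv_ne_top.mpr hV0)]
        apply setLIntegral_congr_fun measurableSet_ball
        intro z _
        dsimp only
        rw [havg z, lintegral_indicator measurableSet_ball]

lemma avg_le_umax {g : Rn n → ℝ≥0∞} (hg : Measurable g) {x y : Rn n} {t τ : ℝ}
    (ht : 0 < t) (hτ : t ≤ τ) (hxy : dist x y < t) :
    avg g y τ ≤ ENNReal.ofReal (2 ^ n) * umaximal (fun z => avg g z t) x := by
  have hτ0 : 0 < τ := lt_of_lt_of_le ht hτ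
  have hτt : 0 < τ + t := by linarith
  have hVτ0 : volume (ball y τ) ≠ 0 := (volume_ball_pos y hτ0).ne'
  have hVτtop : volume (ball y τ) ≠ ∞ := volume_ball_ne_top y τ
  have hV'0 : volume (ball y (τ + t)) ≠ 0 := (volume_ball_pos y hτt).ne'
  have hV'top : volume (ball y (τ + t)) ≠ ∞ := volume_ball_ne_top y (τ + t)
  set A := avg (fun z => avg g z t) y (τ + t) with hA
  have hAle : A ≤ umaximal (fun z => avg g z t) x := by
    rw [hA, avg]
    unfold umaximal
    refine le_iSup_of_le y (le_iSup_of_le (τ + t) (le_iSup_of_le hτt (le_iSup_of_le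
      (by rw [mem_ball]; linarith) le_rfl)))
  have key : (∫⁻ w in ball y τ, g w) ≤ volume (ball y (τ + t)) * A := by
    rw [hA, avg, ← mul_assoc, ENNReal.mul_inv_cancel hV'0 hV'top, one_mul]
    exact lintegral_ball_le_lintegral_avg g hg ht y τ
  calc avg g y τ ≤ (volume (ball y τ))⁻¹ * (volume (ball y (τ + t)) * A) :=
        mul_le_mul_right key _
  _ ≤ (volume (ball y τ))⁻¹ * ((ENNReal.ofReal (2 ^ n) * volume (ball y τ)) * A) := by
        gcongr
        exact volume_ball_le_mul y y hτ0 (by linarith) two_pos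
  _ = ((volume (ball y τ))⁻¹ * volume (ball y τ)) * (ENNReal.ofReal (2 ^ n) * A) := by ring
  _ = ENNReal.ofReal (2 ^ n) * A := by rw [ENNReal.inv_mul_cancel hVτ0 hVτtop, one_mul]
  _ ≤ _ := mul_le_mul_right hAle _

lemma add_rpow_le' {u v : ℝ≥0∞} {p : ℝ} (hp : 0 ≤ p) :
    (u + v) ^ p ≤ (2:ℝ≥0∞) ^ p * (u ^ p + v ^ p) := by
  calc (u + v) ^ p ≤ (2 * max u v) ^ p := by
        apply ENNReal.rpow_le_rpow _ hp
        rw [two_mul]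
        exact add_le_add (le_max_left _ _) (le_max_right _ _)
  _ = (2:ℝ≥0∞) ^ p * (max u v) ^ p := ENNReal.mul_rpow_of_nonneg _ _ hp
  _ ≤ (2:ℝ≥0∞) ^ p * (u ^ p + v ^ p) := by
      apply mul_le_mul_right
      rcases le_total u v with h | h
      · rw [max_eq_right h]; exact le_add_self
      · rw [max_eq_left h]; exact le_self_add

/-- pointwise bound for the centered maximal function's `L^r` ball averages. -/
theorem stmt0 (n : ℕ) (r : ℝ) (hr : 1 < r) :
    ∃ C : ℝ≥0∞, 0 < C ∧ C ≠ ∞ ∧ ∀ (f : Rn n → ℝ), Measurable f →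
      ∀ (x : Rn n) (t : ℝ), 0 < t →
        ballAvg r (maximal f) x t ≤
          C * (ballAvg r (fun y => (‖f y‖₊ : ℝ≥0∞)) x (2 * t) +
            umaximal (fun z => (volume (ball z t))⁻¹ * ∫⁻ w in ball z t, (‖f w‖₊ : ℝ≥0∞)) x) := by
  obtain ⟨Cs, hCstop, hS⟩ := strong_type_Mq (n := n) hr
  have hr0 : (0:ℝ) < r := by linarith
  have hinvr : (0:ℝ) < 1 / r := by positivity
  set c : ℝ≥0∞ := ENNReal.ofReal (2 ^ n) with hc
  have hcfin : c ≠ ∞ := ENNReal.ofReal_ne_top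
  have hrpow_cancel : ∀ X : ℝ≥0∞, (X ^ r) ^ (1/r) = X := fun X => by
    rw [← ENNReal.rpow_mul, mul_one_div_cancel hr0.ne', ENNReal.rpow_one]
  set K : ℝ≥0∞ := ((2:ℝ≥0∞) ^ r) ^ (1/r) * (2:ℝ≥0∞) ^ (1/r) * c with hK
  have hKfin : K ≠ ∞ := by
    apply ENNReal.mul_ne_top (ENNReal.mul_ne_top ?_ ?_) hcfin
    · exact ENNReal.rpow_ne_top_of_nonneg hinvr.le
        (ENNReal.rpow_ne_top_of_nonneg hr0.le ENNReal.ofNat_ne_top)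
    · exact ENNReal.rpow_ne_top_of_nonneg hinvr.le ENNReal.ofNat_ne_top
  set C : ℝ≥0∞ := K * (Cs * c) ^ (1/r) + K + 1 with hC
  have hCtop : C ≠ ∞ := by
    apply ENNReal.add_ne_top.2
    refine ⟨ENNReal.add_ne_top.2 ⟨?_, hKfin⟩, ENNReal.one_ne_top⟩
    exact ENNReal.mul_ne_top hKfin (ENNReal.rpow_ne_top_of_nonneg hinvr.le
      (ENNReal.mul_ne_top hCstop hcfin))
  refine ⟨C, zero_lt_one.trans_le le_add_self, hCtop, ?_⟩
  intro f hf x t ht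
  set g : Rn n → ℝ≥0∞ := fun y => (‖f y‖₊ : ℝ≥0∞) with hgdef
  have hg : Measurable g := hf.nnnorm.coe_nnreal_ennreal
  set g1 : Rn n → ℝ≥0∞ := (ball x (2*t)).indicator g with hg1def
  have hg1 : Measurable g1 := hg.indicator measurableSet_ball
  set U : ℝ≥0∞ :=
    umaximal (fun z => (volume (ball z t))⁻¹ * ∫⁻ w in ball z t, (‖f w‖₊ : ℝ≥0∞)) x with hU
  have hUeq : U = umaximal (fun z => avg g z t) x := rfl
  set B2 : ℝ≥0∞ := (volume (ball x (2*t)))⁻¹ * ∫⁻ y in ball x (2*t), g y ^ r with hB2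
  have hVt0 : volume (ball x t) ≠ 0 := (volume_ball_pos x ht).ne'
  have hVttop : volume (ball x t) ≠ ∞ := volume_ball_ne_top x t
  have hV2t0 : volume (ball x (2*t)) ≠ 0 := (volume_ball_pos x (by linarith)).ne'
  have hV2ttop : volume (ball x (2*t)) ≠ ∞ := volume_ball_ne_top x (2*t)
  -- pointwise bound on ball x t
  have hpt : ∀ y ∈ ball x t, maximal f y ≤ c * Mq g1 y + c * U := by
    intro y hy
    have hyx : dist y x < t := mem_ball.mp hy
    refine iSup₂_le fun τ hτ => ?_
    show avg g y τ ≤ _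
    rcases le_or_gt τ t with hcase | hcase
    · have heq : avg g y τ = avg g1 y τ := by
        unfold avg
        congr 1
        apply setLIntegral_congr_fun measurableSet_ball
        intro w hw
        have hw2 : w ∈ ball x (2*t) := by
          rw [mem_ball] at hw ⊢
          have := dist_triangle w y x
          linarith
        rw [hg1def, indicator_of_mem hw2]
      rw [heq]
      exact (avg_le_ofReal_mul_Mq hτ).trans le_self_add
    · have h1 : avg g y τ ≤ c * umaximal (fun z => avg g z t) x :=
        avg_le_umax hg ht hcase.le (by rw [dist_comm]; exact hyx)
      rw [← hUeq] at h1
      exact h1.trans le_add_self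
  -- main integral bound
  have hmain : (volume (ball x t))⁻¹ * ∫⁻ y in ball x t, maximal f y ^ r ≤
      (2:ℝ≥0∞) ^ r * ((c ^ r * ((Cs * c) * B2)) + (c * U) ^ r) := by
    have h1 : ∫⁻ y in ball x t, maximal f y ^ r ≤
        (2:ℝ≥0∞) ^ r * (∫⁻ y in ball x t, (c * Mq g1 y) ^ r + (c * U) ^ r) := by
      calc ∫⁻ y in ball x t, maximal f y ^ r
          ≤ ∫⁻ y in ball x t, (2:ℝ≥0∞) ^ r * ((c * Mq g1 y) ^ r + (c * U) ^ r) := by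
            apply setLIntegral_mono' measurableSet_ball
            intro y hy
            calc maximal f y ^ r ≤ (c * Mq g1 y + c * U) ^ r :=
                  ENNReal.rpow_le_rpow (hpt y hy) hr0.le
            _ ≤ _ := add_rpow_le' hr0.le
      _ = _ := lintegral_const_mul' _ _
            (ENNReal.rpow_ne_top_of_nonneg hr0.le ENNReal.ofNat_ne_top)
    have h2 : ∫⁻ y in ball x t, (c * Mq g1 y) ^ r + (c * U) ^ r =
        (∫⁻ y in ball x t, (c * Mq g1 y) ^ r) + (c * U) ^ r * volume (ball x t) := by
      rw [lintegral_add_right _ measurable_const, setLIntegral_const]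
    have h3 : ∫⁻ y in ball x t, (c * Mq g1 y) ^ r ≤ c ^ r * (Cs * (volume (ball x (2*t)) * B2)) := by
      calc ∫⁻ y in ball x t, (c * Mq g1 y) ^ r
          ≤ ∫⁻ y, (c * Mq g1 y) ^ r := lintegral_mono' Measure.restrict_le_self le_rfl
      _ = c ^ r * ∫⁻ y, Mq g1 y ^ r := by
            simp_rw [ENNReal.mul_rpow_of_nonneg _ _ hr0.le]
            rw [lintegral_const_mul' _ _ (ENNReal.rpow_ne_top_of_nonneg hr0.le hcfin)]
      _ ≤ c ^ r * (Cs * ∫⁻ y, g1 y ^ r) := mul_le_mul_right (hS g1 hg1) _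
      _ = c ^ r * (Cs * (volume (ball x (2*t)) * B2)) := by
            congr 2
            have hind : ∀ y, g1 y ^ r = (ball x (2*t)).indicator (fun w => g w ^ r) y := by
              intro y
              rw [hg1def]
              by_cases hy : y ∈ ball x (2*t)
              · rw [indicator_of_mem hy, indicator_of_mem hy]
              · rw [indicator_of_notMem hy, indicator_of_notMem hy,
                  ENNReal.zero_rpow_of_pos hr0]
            simp_rw [hind]
            rw [lintegral_indicator measurableSet_ball, hB2, ← mul_assoc,
              ENNReal.mul_inv_cancel hV2t0 hV2ttop, one_mul]
    calc (volume (ball x t))⁻¹ * ∫⁻ y in ball x t, maximal f y ^ r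
        ≤ (volume (ball x t))⁻¹ * ((2:ℝ≥0∞) ^ r *
            ((∫⁻ y in ball x t, (c * Mq g1 y) ^ r) + (c * U) ^ r * volume (ball x t))) := by
          rw [← h2]
          exact mul_le_mul_right h1 _
    _ ≤ (volume (ball x t))⁻¹ * ((2:ℝ≥0∞) ^ r *
            ((c ^ r * (Cs * ((c * volume (ball x t)) * B2))) + (c * U) ^ r * volume (ball x t))) := by
          gcongr
          · exact le_trans h3 (by gcongr; exact volume_ball_le_mul x x ht le_rfl two_pos)
    _ = (2:ℝ≥0∞) ^ r * ((c ^ r * ((Cs * c) * B2)) + (c * U) ^ r) *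
          ((volume (ball x t))⁻¹ * volume (ball x t)) := by ring
    _ = _ := by rw [ENNReal.inv_mul_cancel hVt0 hVttop, mul_one]
  -- take 1/r powers
  calc ballAvg r (maximal f) x t
      = ((volume (ball x t))⁻¹ * ∫⁻ y in ball x t, maximal f y ^ r) ^ (1/r) := rfl
  _ ≤ ((2:ℝ≥0∞) ^ r * ((c ^ r * ((Cs * c) * B2)) + (c * U) ^ r)) ^ (1/r) :=
        ENNReal.rpow_le_rpow hmain hinvr.le
  _ = ((2:ℝ≥0∞) ^ r) ^ (1/r) * ((c ^ r * ((Cs * c) * B2)) + (c * U) ^ r) ^ (1/r) :=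
        ENNReal.mul_rpow_of_nonneg _ _ hinvr.le
  _ ≤ ((2:ℝ≥0∞) ^ r) ^ (1/r) * ((2:ℝ≥0∞) ^ (1/r) *
        ((c ^ r * ((Cs * c) * B2)) ^ (1/r) + ((c * U) ^ r) ^ (1/r))) :=
        mul_le_mul_right (add_rpow_le' hinvr.le) _
  _ = K * ((Cs * c) ^ (1/r) * B2 ^ (1/r)) + K * U := by
        rw [hrpow_cancel (c * U)]
        rw [ENNReal.mul_rpow_of_nonneg (c ^ r) _ hinvr.le, hrpow_cancel c,
          ENNReal.mul_rpow_of_nonneg (Cs * c) _ hinvr.le]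
        ring
  _ ≤ C * (B2 ^ (1/r) + U) := by
        rw [mul_add]
        apply add_le_add
        · rw [← mul_assoc]
          apply mul_le_mul_left
          show K * (Cs * c) ^ (1/r) ≤ C
          rw [hC]
          exact le_add_right le_self_add
        · exact mul_le_mul_left (by rw [hC]; exact le_add_right le_add_self) _
  _ = C * (ballAvg r (fun y => (‖f y‖₊ : ℝ≥0∞)) x (2 * t) + U) := rfl
end
end

section
/- Let T be a Calderón–Zygmund operator of order δ ∈ (0,1] bounded on tent space T^r_r (acting slicewise) for a fixed 1 < r < ∞, and let n/(n+δ) < q ≤ 1. If A is a 𝔗^q_r atom adapted to ball B (a T^q_r atom with ∫_{ℝⁿ} A(x,t) dx = 0 for a.e. t), then the slicewise image TA(x,t) = T(A(·,t))(x) is, up to a constant independent of A, a T^q_r molecule adapted to B with decay exponent ε = n + δ − n/q > 0: (∬_{T(4B)} |TA|^r dx dt/t)^{1/r} ≲ |4B|^{1/r−1/q}, and for j ≥ 2, (∬_{T(2^{j+1}B)∖T(2^jB)} |TA|^r dx dt/t)^{1/r} ≲ 2^{−(j+1)ε} |2^{j+1}B|^{1/r−1/q}. -/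
open MeasureTheory Metric Set ENNReal
open scoped NNReal

noncomputable section

variable {n : ℕ}

namespace Stmt8Aux

variable {n : ℕ}

lemma tentInt_mono_set (r : ℝ) (M : Rn n → ℝ → ℝ) {S S' : Set (Rn n × ℝ)} (h : S ⊆ S') :
    tentInt r M S ≤ tentInt r M S' := by
  refine lintegral_mono fun t => ?_
  refine mul_le_mul_left (lintegral_mono fun y => ?_) _
  exact Set.indicator_le_indicator_of_subset h (fun _ => zero_le) _

lemma slice_meas {A : Rn n → ℝ → ℝ} (hA : Measurable (Function.uncurry A)) (t : ℝ) :
    Measurable fun y => A y t := hA.comp (measurable_id.prodMk measurable_const)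

lemma nontrivial_Rn (hn : 0 < n) : Nontrivial (Rn n) := by
  exact ⟨EuclideanSpace.single ⟨0, hn⟩ (1:ℝ), 0, by
    intro h
    have := congrArg Norm.norm h
    simp [EuclideanSpace.norm_single] at this⟩

lemma vol_ball_eq (hn : 0 < n) (x₀ : Rn n) {ρ : ℝ} (hρ : 0 ≤ ρ) :
    volume (ball x₀ ρ) = ENNReal.ofReal (ρ ^ n) * volume (ball (0 : Rn n) 1) := by
  have := nontrivial_Rn hn
  rw [Measure.addHaar_ball volume x₀ hρ, finrank_euclideanSpace_fin]

lemma vol_ball_scale (hn : 0 < n) (x₀ : Rn n) {a ρ : ℝ} (ha : 0 ≤ a) (hρ : 0 ≤ ρ) :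
    volume (ball x₀ (a * ρ)) = ENNReal.ofReal (a ^ n) * volume (ball x₀ ρ) := by
  have := nontrivial_Rn hn
  rw [Measure.addHaar_ball volume x₀ (mul_nonneg ha hρ), Measure.addHaar_ball volume x₀ hρ,
    finrank_euclideanSpace_fin, mul_pow, ENNReal.ofReal_mul (by positivity), mul_assoc]

lemma exists_unit_dir (hn : 0 < n) (v : Rn n) : ∃ u : Rn n, ‖u‖ = 1 ∧ v = ‖v‖ • u := by
  rcases eq_or_ne v 0 with h | h
  · exact ⟨EuclideanSpace.single ⟨0, hn⟩ (1:ℝ), by simp [EuclideanSpace.norm_single], by simp [h]⟩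
  · refine ⟨‖v‖⁻¹ • v, norm_smul_inv_norm h, ?_⟩
    rw [smul_smul, mul_inv_cancel₀ (norm_ne_zero_iff.mpr h), one_smul]

lemma infDist_compl_ball_le (hn : 0 < n) (y x₀ : Rn n) {ρ : ℝ} (hρ : 0 < ρ) :
    infDist y (ball x₀ ρ)ᶜ ≤ ρ := by
  obtain ⟨u, hnu, hyx⟩ := exists_unit_dir hn (y - x₀)
  set z : Rn n := y + ρ • u with hz
  have hdzx : dist z x₀ = ‖y - x₀‖ + ρ := by
    have h1 : z - x₀ = (‖y - x₀‖ + ρ) • u := by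
      rw [hz, add_sub_right_comm, add_smul, ← hyx]
    rw [dist_eq_norm, h1, norm_smul, hnu, mul_one, Real.norm_eq_abs,
      abs_of_nonneg (by positivity)]
  have hzmem : z ∈ (ball x₀ ρ)ᶜ := by
    simp only [mem_compl_iff, mem_ball, not_lt, hdzx]
    linarith [norm_nonneg (y - x₀)]
  calc infDist y (ball x₀ ρ)ᶜ ≤ dist y z := infDist_le_dist_of_mem hzmem
  _ = ρ := by
      rw [hz, dist_eq_norm]
      simp [norm_smul, hnu, abs_of_nonneg hρ.le]

lemma mem_ball_of_tent {x₀ : Rn n} {ρ : ℝ} {p : Rn n × ℝ}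
    (hp : 0 < p.2 ∧ p.2 ≤ infDist p.1 (ball x₀ ρ)ᶜ) :
    p.1 ∈ ball x₀ ρ := by
  obtain ⟨h1, h2⟩ := hp
  by_contra h
  rw [infDist_zero_of_mem (mem_compl h)] at h2
  exact absurd h2 (not_le.mpr h1)

lemma infDist_compl_ball_ge {x : Rn n} {x₀ : Rn n} {R : ℝ} (hn : 0 < n) (hR : 0 < R) :
    R - dist x x₀ ≤ infDist x (ball x₀ R)ᶜ := by
  have hne : ((ball x₀ R)ᶜ : Set (Rn n)).Nonempty := by
    refine ⟨x₀ + (R + 1) • EuclideanSpace.single ⟨0, hn⟩ (1:ℝ), ?_⟩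
    simp only [mem_compl_iff, mem_ball, not_lt, dist_eq_norm, add_sub_cancel_left]
    rw [norm_smul, Real.norm_eq_abs, abs_of_nonneg (by linarith : (0:ℝ) ≤ R + 1)]
    simp [EuclideanSpace.norm_single]
  by_contra h
  push_neg at h
  obtain ⟨z, hz, hdz⟩ := (infDist_lt_iff hne).mp h
  have hz' : R ≤ dist z x₀ := by simpa [mem_ball, not_lt] using hz
  have := dist_triangle z x x₀
  rw [dist_comm z x] at this
  linarith

lemma holder_step {f : Rn n → ℝ} (hf : Measurable f) {x₀ : Rn n} {ρ r : ℝ} (hr : 1 < r)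
    (hsupp : ∀ z, f z ≠ 0 → z ∈ ball x₀ ρ) :
    ∫⁻ z, (‖f z‖₊ : ℝ≥0∞) ≤
      (∫⁻ z, (‖f z‖₊ : ℝ≥0∞) ^ r) ^ (1 / r) * (volume (ball x₀ ρ)) ^ (1 - 1 / r) := by
  have hconj : r.HolderConjugate (Real.conjExponent r) := Real.HolderConjugate.conjExponent hr
  have h1 : ∫⁻ z, (‖f z‖₊ : ℝ≥0∞) = ∫⁻ z in ball x₀ ρ, (‖f z‖₊ : ℝ≥0∞) := by
    rw [← lintegral_indicator measurableSet_ball]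
    refine lintegral_congr fun z => ?_
    by_cases hz : z ∈ ball x₀ ρ
    · rw [Set.indicator_of_mem hz]
    · have : f z = 0 := by by_contra h; exact hz (hsupp z h)
      simp [Set.indicator_of_notMem hz, this]
  rw [h1]
  have h2 : ∫⁻ z in ball x₀ ρ, (‖f z‖₊ : ℝ≥0∞) =
      ∫⁻ z in ball x₀ ρ, (((fun z => (‖f z‖₊ : ℝ≥0∞)) * (fun _ => (1:ℝ≥0∞))) : Rn n → ℝ≥0∞) z := by
    simp
  rw [h2]
  calc _ ≤ (∫⁻ z in ball x₀ ρ, (‖f z‖₊ : ℝ≥0∞) ^ r) ^ (1 / r) *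
        (∫⁻ _ in ball x₀ ρ, (1:ℝ≥0∞) ^ (Real.conjExponent r)) ^ (1 / Real.conjExponent r) :=
      ENNReal.lintegral_mul_le_Lp_mul_Lq _ hconj
        (hf.nnnorm.coe_nnreal_ennreal.aemeasurable) aemeasurable_const
    _ ≤ _ := by
      gcongr
      · exact Measure.restrict_le_self
      · rw [show (1:ℝ≥0∞) ^ (Real.conjExponent r) = 1 from ENNReal.one_rpow _]
        rw [lintegral_one, Measure.restrict_apply_univ]
        rw [show 1 / Real.conjExponent r = 1 - 1/r by
          rw [Real.conjExponent]; field_simp]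

lemma kernel_bound {r δ CK : ℝ} (hδ0 : 0 < δ) (hCK : 0 < CK)
    {K : Rn n → Rn n → ℝ} {T : (Rn n → ℝ) → Rn n → ℝ}
    (hsmooth : ∀ x y z : Rn n, dist x y > 2 * dist y z →
      |K x y - K x z| ≤ CK * dist y z ^ δ / dist x y ^ ((n : ℝ) + δ))
    (hrep : ∀ f : Rn n → ℝ, MemLp f (ENNReal.ofReal r) volume →
      ∀ x, x ∉ tsupport f → T f x = ∫ y, K x y * f y)
    {f : Rn n → ℝ} (hfp : MemLp f (ENNReal.ofReal r) volume)
    (hint : Integrable f volume) (hmean : ∫ z, f z = 0)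
    {x₀ : Rn n} {ρ : ℝ} (hρ : 0 < ρ)
    (hsupp : ∀ z, f z ≠ 0 → z ∈ ball x₀ ρ)
    {x : Rn n} {D : ℝ} (hD : 2 * ρ ≤ D) (hx : D + ρ ≤ dist x x₀) :
    (‖T f x‖₊ : ℝ≥0∞) ≤
      ENNReal.ofReal (CK * ρ ^ δ / D ^ ((n:ℝ) + δ)) * ∫⁻ z, (‖f z‖₊ : ℝ≥0∞) := by
  have hD0 : 0 < D := lt_of_lt_of_le (by linarith) hD
  set Mb : ℝ := CK * ρ ^ δ / D ^ ((n:ℝ) + δ) with hMb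
  have hMb0 : 0 ≤ Mb := by positivity
  have hxs : x ∉ tsupport f := by
    intro hxmem
    have h1 : tsupport f ⊆ closedBall x₀ ρ := by
      rw [tsupport, ← closure_ball x₀ (ne_of_gt hρ)]
      exact closure_mono fun z hz => hsupp z hz
    have := h1 hxmem
    rw [mem_closedBall] at this
    linarith
  rw [hrep f hfp x hxs]
  by_cases hg : Integrable (fun y => K x y * f y) volume
  · set c := K x x₀ with hc
    have hkey : ∀ y, |(K x y - c) * f y| ≤ Mb * |f y| := by
      intro y
      by_cases hy : f y = 0
      · simp [hy, hMb0]
      · have hyb := hsupp y hy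
        rw [mem_ball] at hyb
        have hxy : D < dist x y := by
          have := dist_triangle x y x₀
          linarith
        have h2 : dist x y > 2 * dist y x₀ := by linarith
        have hb := hsmooth x y x₀ h2
        have hb2 : CK * dist y x₀ ^ δ / dist x y ^ ((n:ℝ) + δ) ≤ Mb := by
          rw [hMb]
          have hnum : dist y x₀ ^ δ ≤ ρ ^ δ :=
            Real.rpow_le_rpow dist_nonneg hyb.le hδ0.le
          have hden : D ^ ((n:ℝ) + δ) ≤ dist x y ^ ((n:ℝ) + δ) :=
            Real.rpow_le_rpow hD0.le hxy.le (by positivity)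
          have hden0 : (0:ℝ) < D ^ ((n:ℝ) + δ) := Real.rpow_pos_of_pos hD0 _
          exact div_le_div₀ (by positivity) (mul_le_mul_of_nonneg_left hnum hCK.le) hden0 hden
        rw [abs_mul]
        have := abs_nonneg (f y)
        nlinarith [abs_nonneg (K x y - c)]
    have hint2 : Integrable (fun y => (K x y - c) * f y) volume := by
      have heq : (fun y => (K x y - c) * f y) = fun y => K x y * f y - c * f y := by
        funext y; ring
      rw [heq]
      exact hg.sub (hint.const_mul c)
    have heq2 : ∫ y, K x y * f y = ∫ y, (K x y - c) * f y := by
      have h1 : ∫ y, (K x y - c) * f y = (∫ y, K x y * f y) - ∫ y, c * f y := by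
        rw [← integral_sub hg (hint.const_mul c)]
        congr 1; funext y; ring
      rw [h1, integral_const_mul, hmean, mul_zero, sub_zero]
    rw [heq2]
    have h3 : |∫ y, (K x y - c) * f y| ≤ Mb * ∫ y, |f y| := by
      calc |∫ y, (K x y - c) * f y| = ‖∫ y, (K x y - c) * f y‖ := (Real.norm_eq_abs _).symm
        _ ≤ ∫ y, ‖(K x y - c) * f y‖ := norm_integral_le_integral_norm _
        _ = ∫ y, |(K x y - c) * f y| := by simp only [Real.norm_eq_abs]
        _ ≤ ∫ y, Mb * |f y| := by
            refine integral_mono hint2.abs (hint.abs.const_mul Mb) hkey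
        _ = Mb * ∫ y, |f y| := by rw [integral_const_mul]
    calc (‖∫ y, (K x y - c) * f y‖₊ : ℝ≥0∞)
        = ENNReal.ofReal |∫ y, (K x y - c) * f y| := by
          rw [← Real.norm_eq_abs, ofReal_norm, enorm_eq_nnnorm]
      _ ≤ ENNReal.ofReal (Mb * ∫ y, |f y|) := ENNReal.ofReal_le_ofReal h3
      _ = ENNReal.ofReal Mb * ENNReal.ofReal (∫ y, |f y|) :=
          ENNReal.ofReal_mul hMb0
      _ ≤ ENNReal.ofReal Mb * ∫⁻ z, (‖f z‖₊ : ℝ≥0∞) := by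
          gcongr
          rw [show (fun y => |f y|) = fun y => ‖f y‖ by funext y; exact (Real.norm_eq_abs _).symm]
          exact (ofReal_integral_norm_eq_lintegral_enorm hint).le
  · rw [integral_undef hg]
    simp

lemma T_zero {r : ℝ} {K : Rn n → Rn n → ℝ} {T : (Rn n → ℝ) → Rn n → ℝ}
    (hrep : ∀ f : Rn n → ℝ, MemLp f (ENNReal.ofReal r) volume →
      ∀ x, x ∉ tsupport f → T f x = ∫ y, K x y * f y) (x : Rn n) :
    T (fun _ => (0:ℝ)) x = 0 := by
  have h := hrep (fun _ => (0:ℝ)) MemLp.zero' x (by simp [tsupport])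
  simpa using h

lemma memLp_slice {f : Rn n → ℝ} (hf : Measurable f) {r : ℝ} (hr : 1 < r)
    (hfin : (∫⁻ z, (‖f z‖₊ : ℝ≥0∞) ^ r) ≠ ∞) : MemLp f (ENNReal.ofReal r) volume := by
  have hr0 : (0:ℝ) < r := lt_trans one_pos hr
  refine ⟨hf.aestronglyMeasurable, ?_⟩
  rw [eLpNorm_eq_lintegral_rpow_enorm_toReal (by simp [ENNReal.ofReal_eq_zero]; linarith)
    ENNReal.ofReal_ne_top, ENNReal.toReal_ofReal hr0.le]
  exact ENNReal.rpow_lt_top_of_nonneg (by positivity) hfin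

lemma slice_Lr {r CK : ℝ} (hr : 1 < r) (hCK : 0 < CK)
    {T : (Rn n → ℝ) → Rn n → ℝ}
    (hLr : ∀ f : Rn n → ℝ, MemLp f (ENNReal.ofReal r) volume →
      eLpNorm (T f) (ENNReal.ofReal r) volume ≤
        ENNReal.ofReal CK * eLpNorm f (ENNReal.ofReal r) volume)
    {f : Rn n → ℝ} (hf : Measurable f) :
    (∫⁻ y, (‖T f y‖₊ : ℝ≥0∞) ^ r) ≤ ENNReal.ofReal CK ^ r * ∫⁻ z, (‖f z‖₊ : ℝ≥0∞) ^ r := by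
  have hr0 : (0:ℝ) < r := lt_trans one_pos hr
  by_cases hfin : (∫⁻ z, (‖f z‖₊ : ℝ≥0∞) ^ r) = ∞
  · rw [hfin, ENNReal.mul_top]
    · exact le_top
    · exact (ENNReal.rpow_pos (ENNReal.ofReal_pos.mpr hCK) ENNReal.ofReal_ne_top).ne'
  · have hmem := memLp_slice hf hr hfin
    have h := hLr f hmem
    rw [eLpNorm_eq_lintegral_rpow_enorm_toReal (by simp [ENNReal.ofReal_eq_zero]; linarith)
      ENNReal.ofReal_ne_top, eLpNorm_eq_lintegral_rpow_enorm_toReal (by simp [ENNReal.ofReal_eq_zero]; linarith)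
      ENNReal.ofReal_ne_top, ENNReal.toReal_ofReal hr0.le] at h
    have h2 := ENNReal.rpow_le_rpow h hr0.le
    rw [ENNReal.mul_rpow_of_nonneg _ _ hr0.le, ← ENNReal.rpow_mul, ← ENNReal.rpow_mul,
      one_div_mul_cancel hr0.ne', ENNReal.rpow_one, ENNReal.rpow_one] at h2
    exact h2

lemma scalar_step {q δ ρ CK : ℝ} {n j : ℕ} (hq0 : 0 < q) (hδ0 : 0 < δ) (hρ : 0 < ρ)
    (hCK : 0 < CK) (hj : 2 ≤ j) :
    CK * ρ ^ δ / (((2:ℝ)^j - 2) * ρ) ^ ((n:ℝ) + δ) * ((((2:ℝ)^(j+1)) ^ n) ^ (1/q)) * ρ ^ n ≤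
    CK * 2 ^ (2*((n:ℝ)+δ)) * 2 ^ (-((j:ℝ)+1) * ((n:ℝ)+δ-(n:ℝ)/q)) := by
  have h4 : (4:ℝ) ≤ 2^j := by
    calc (4:ℝ) = 2^2 := by norm_num
    _ ≤ 2^j := pow_le_pow_right₀ one_le_two hj
  have hhalf : (2:ℝ) ^ ((j:ℝ) - 1) ≤ 2^j - 2 := by
    have h1 : (2:ℝ) ^ ((j:ℝ) - 1) = 2^(j:ℝ) / 2 := by
      rw [Real.rpow_sub two_pos, Real.rpow_one]
    rw [h1, Real.rpow_natCast]
    linarith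
  have hD0 : (0:ℝ) < (2^j - 2) * ρ := by nlinarith
  have hstep : CK * ρ ^ δ / (((2:ℝ)^j - 2) * ρ) ^ ((n:ℝ) + δ) ≤
      CK * ρ ^ δ / ((2:ℝ) ^ ((j:ℝ) - 1) * ρ) ^ ((n:ℝ) + δ) := by
    apply div_le_div_of_nonneg_left (by positivity) (by positivity)
    exact Real.rpow_le_rpow (by positivity) (by nlinarith) (by positivity)
  have hmono : CK * ρ ^ δ / (((2:ℝ)^j - 2) * ρ) ^ ((n:ℝ) + δ) * ((((2:ℝ)^(j+1)) ^ n) ^ (1/q)) * ρ ^ n ≤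
      CK * ρ ^ δ / ((2:ℝ) ^ ((j:ℝ) - 1) * ρ) ^ ((n:ℝ) + δ) * ((((2:ℝ)^(j+1)) ^ n) ^ (1/q)) * ρ ^ n := by
    have h1 : (0:ℝ) ≤ (((2:ℝ)^(j+1)) ^ n) ^ (1/q) := by positivity
    have h2 : (0:ℝ) ≤ ρ ^ n := by positivity
    exact mul_le_mul_of_nonneg_right (mul_le_mul_of_nonneg_right hstep h1) h2
  refine le_trans hmono (le_of_eq ?_)
  have e1 : (((2:ℝ)^(j+1)) ^ n) ^ (1/q) = 2 ^ ((((j:ℝ)+1) * n) * (1/q)) := by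
    rw [← Real.rpow_natCast (2:ℝ) (j+1), ← Real.rpow_natCast _ n, ← Real.rpow_mul (by positivity),
      ← Real.rpow_mul (by positivity)]
    push_cast
    ring_nf
  have e2 : ((2:ℝ) ^ ((j:ℝ) - 1) * ρ) ^ ((n:ℝ) + δ) =
      2 ^ (((j:ℝ) - 1) * ((n:ℝ) + δ)) * ρ ^ ((n:ℝ) + δ) := by
    rw [Real.mul_rpow (by positivity) hρ.le, ← Real.rpow_mul (by positivity)]
  have e3 : (ρ:ℝ) ^ n = ρ ^ ((n:ℝ)) := (Real.rpow_natCast ρ n).symm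
  rw [e1, e2, e3]
  rw [div_eq_mul_inv, mul_inv, ← Real.rpow_neg (by positivity), ← Real.rpow_neg hρ.le]
  have hρpow : ρ ^ δ * ρ ^ (-((n:ℝ) + δ)) * ρ ^ ((n:ℝ)) = 1 := by
    rw [← Real.rpow_add hρ, ← Real.rpow_add hρ]
    norm_num
  have h2pow : (2:ℝ) ^ (-(((j:ℝ) - 1) * ((n:ℝ) + δ))) * 2 ^ ((((j:ℝ)+1) * n) * (1/q)) =
      2 ^ (2*((n:ℝ)+δ)) * 2 ^ (-((j:ℝ)+1) * ((n:ℝ)+δ-(n:ℝ)/q)) := by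
    rw [← Real.rpow_add two_pos, ← Real.rpow_add two_pos]
    congr 1
    field_simp
    ring
  calc CK * ρ ^ δ * (2 ^ (-(((j:ℝ) - 1) * ((n:ℝ) + δ))) * ρ ^ (-((n:ℝ) + δ))) *
        2 ^ ((((j:ℝ)+1) * (n:ℝ)) * (1/q)) * ρ ^ ((n:ℝ))
      = CK * (2 ^ (-(((j:ℝ) - 1) * ((n:ℝ) + δ))) * 2 ^ ((((j:ℝ)+1) * (n:ℝ)) * (1/q))) *
        (ρ ^ δ * ρ ^ (-((n:ℝ) + δ)) * ρ ^ ((n:ℝ))) := by ring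
    _ = CK * 2 ^ (2*((n:ℝ)+δ)) * 2 ^ (-((j:ℝ)+1) * ((n:ℝ)+δ-(n:ℝ)/q)) := by
        rw [hρpow, h2pow]; ring

lemma mem_tent_iff {x₀ : Rn n} {ρ : ℝ} {p : Rn n × ℝ} :
    p ∈ tent x₀ ρ ↔ 0 < p.2 ∧ p.2 ≤ infDist p.1 (ball x₀ ρ)ᶜ := Iff.rfl

end Stmt8Aux

open Stmt8Aux

set_option maxHeartbeats 2000000 in
/-- a Calderón–Zygmund operator maps `𝔗^q_r` atoms to `T^q_r` molecules with
decay exponent `ε = n + δ - n/q`. -/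
theorem stmt8 (n : ℕ) (q r δ : ℝ) (hr : 1 < r) (hδ0 : 0 < δ) (hδ1 : δ ≤ 1)
    (hq : (n : ℝ) / (n + δ) < q) (hq1 : q ≤ 1)
    (K : Rn n → Rn n → ℝ) (T : (Rn n → ℝ) → Rn n → ℝ) (CK : ℝ) (hCK : 0 < CK)
    (hsmooth : ∀ x y z : Rn n, dist x y > 2 * dist y z →
      |K x y - K x z| ≤ CK * dist y z ^ δ / dist x y ^ ((n : ℝ) + δ))
    (hLr : ∀ f : Rn n → ℝ, MemLp f (ENNReal.ofReal r) volume →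
      eLpNorm (T f) (ENNReal.ofReal r) volume ≤
        ENNReal.ofReal CK * eLpNorm f (ENNReal.ofReal r) volume)
    (hTtent : ∀ F : Rn n → ℝ → ℝ, Measurable (Function.uncurry F) →
      tentNorm r r (enn (fun y t => T (fun z => F z t) y)) ≤
        ENNReal.ofReal CK * tentNorm r r (enn F))
    (hrep : ∀ f : Rn n → ℝ, MemLp f (ENNReal.ofReal r) volume →
      ∀ x, x ∉ tsupport f → T f x = ∫ y, K x y * f y) :
    ∃ C : ℝ≥0∞, 0 < C ∧ C ≠ ∞ ∧ ∀ (x₀ : Rn n) (ρ : ℝ), 0 < ρ →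
      ∀ (A : Rn n → ℝ → ℝ), Measurable (Function.uncurry A) →
      (∀ y t, A y t ≠ 0 → (y, t) ∈ tent x₀ ρ) →
      (tentInt r A Set.univ) ^ (1 / r) ≤ (volume (ball x₀ ρ)) ^ (1 / r - 1 / q) →
      (∀ᵐ t ∂(volume.restrict (Ioi (0 : ℝ))), (∫ x, A x t) = 0) →
      (tentInt r (fun y t => T (fun z => A z t) y) (tent x₀ (4 * ρ))) ^ (1 / r) ≤
          C * (volume (ball x₀ (4 * ρ))) ^ (1 / r - 1 / q) ∧
      (∀ j : ℕ, 2 ≤ j →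
        (tentInt r (fun y t => T (fun z => A z t) y)
            (tent x₀ ((2 : ℝ) ^ (j + 1) * ρ) \ tent x₀ ((2 : ℝ) ^ j * ρ))) ^ (1 / r) ≤
          C * ENNReal.ofReal ((2 : ℝ) ^ (-((j : ℝ) + 1) * ((n : ℝ) + δ - n / q))) *
            (volume (ball x₀ ((2 : ℝ) ^ (j + 1) * ρ))) ^ (1 / r - 1 / q)) := by
  have hr0 : (0:ℝ) < r := lt_trans one_pos hr
  have hq0 : (0:ℝ) < q := lt_of_le_of_lt (by positivity) hq
  set V : ℝ≥0∞ := volume (ball (0 : Rn n) 1) with hV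
  set C1 : ℝ≥0∞ := ENNReal.ofReal CK * (ENNReal.ofReal ((4:ℝ)^n)) ^ (1/q - 1/r) with hC1
  set C2 : ℝ≥0∞ := ENNReal.ofReal (CK * 2 ^ (2*((n:ℝ)+δ))) * V with hC2
  have hVtop : V ≠ ∞ := measure_ball_lt_top.ne
  have hC1top : C1 ≠ ∞ := by
    rw [hC1]
    exact (ENNReal.mul_lt_top ENNReal.ofReal_lt_top
      (ENNReal.rpow_lt_top_of_nonneg (by
        have h1 : 1/r ≤ 1/q := one_div_le_one_div_of_le hq0 (le_trans hq1 hr.le)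
        linarith) ENNReal.ofReal_ne_top)).ne
  have hC2top : C2 ≠ ∞ := by
    rw [hC2]
    exact (ENNReal.mul_lt_top ENNReal.ofReal_lt_top hVtop.lt_top).ne
  refine ⟨C1 ⊔ C2 ⊔ 1, lt_of_lt_of_le one_pos le_sup_right, ?_, ?_⟩
  · exact (max_lt (max_lt hC1top.lt_top hC2top.lt_top) one_lt_top).ne
  intro x₀ ρ hρ A hAmeas hsupp hsize hmean
  rcases Nat.eq_zero_or_pos n with hn0 | hn
  · -- degenerate dimension-zero case
    subst hn0
    have hA0 : ∀ y t, A y t = 0 := by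
      intro y t
      by_contra h
      obtain ⟨h1, h2⟩ := hsupp y t h
      have hball : (ball x₀ ρ : Set (Rn 0)) = univ := eq_univ_of_forall (fun z => by
        rw [mem_ball]
        have hz : z = x₀ := by
          ext i
          exact absurd i.2 (by omega)
        rw [hz, dist_self]
        exact hρ)
      rw [hball, compl_univ, infDist_empty] at h2
      simp only at h2
      linarith
    have hTA0 : ∀ t y, T (fun z => A z t) y = 0 := by
      intro t y
      have h : (fun z => A z t) = (fun _ => (0:ℝ)) := funext fun z => hA0 z t
      rw [h]
      exact T_zero hrep y
    have hzero : ∀ S : Set (Rn 0 × ℝ), tentInt r (fun y t => T (fun z => A z t) y) S = 0 := by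
      intro S
      have hf : (fun p : Rn 0 × ℝ => (‖T (fun z => A z p.2) p.1‖₊ : ℝ≥0∞) ^ r) =
          fun _ => 0 := by
        funext p
        rw [hTA0 p.2 p.1]
        simp [ENNReal.zero_rpow_of_pos hr0]
      simp [tentInt, hf]
    constructor
    · rw [hzero, ENNReal.zero_rpow_of_pos (by positivity)]
      exact zero_le
    · intro j hj
      rw [hzero, ENNReal.zero_rpow_of_pos (by positivity)]
      exact zero_le
  · -- main case
    have hAt : ∀ t, Measurable fun y => A y t := fun t => slice_meas hAmeas t
    have hcls : ∀ t z, A z t ≠ 0 → z ∈ ball x₀ ρ := fun t z h =>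
      mem_ball_of_tent (p := (z, t)) (mem_tent_iff.mp (hsupp z t h))
    have htle : ∀ t z, A z t ≠ 0 → t ≤ ρ := by
      intro t z h
      obtain ⟨h1, h2⟩ := hsupp z t h
      exact le_trans h2 (infDist_compl_ball_le hn z x₀ hρ)
    set gA : ℝ → ℝ≥0∞ := fun t => ∫⁻ y, (‖A y t‖₊ : ℝ≥0∞) ^ r with hgA
    have htent_univ : tentInt r A univ = ∫⁻ t in Ioi 0, gA t * ENNReal.ofReal t⁻¹ := by
      simp [tentInt, hgA]
    have hAuniv : tentInt r A univ ≤ (volume (ball x₀ ρ)) ^ ((1/r - 1/q) * r) := by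
      have h := ENNReal.rpow_le_rpow hsize hr0.le
      rwa [← ENNReal.rpow_mul, ← ENNReal.rpow_mul, one_div_mul_cancel hr0.ne',
        ENNReal.rpow_one] at h
    set TA : Rn n → ℝ → ℝ := fun y t => T (fun z => A z t) y with hTA
    have hCKr_ne_top : (ENNReal.ofReal CK) ^ r ≠ ∞ :=
      (ENNReal.rpow_lt_top_of_nonneg hr0.le ENNReal.ofReal_ne_top).ne
    have huniv : tentInt r TA univ ≤ (ENNReal.ofReal CK) ^ r * tentInt r A univ := by
      rw [htent_univ]
      calc tentInt r TA univ
          = ∫⁻ t in Ioi 0, (∫⁻ y, (‖TA y t‖₊ : ℝ≥0∞) ^ r) * ENNReal.ofReal t⁻¹ := by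
            simp [tentInt]
        _ ≤ ∫⁻ t in Ioi 0, ((ENNReal.ofReal CK) ^ r * gA t) * ENNReal.ofReal t⁻¹ :=
            lintegral_mono fun t => mul_le_mul_left (slice_Lr hr hCK hLr (hAt t)) _
        _ = (ENNReal.ofReal CK) ^ r * ∫⁻ t in Ioi 0, gA t * ENNReal.ofReal t⁻¹ := by
            rw [← lintegral_const_mul' _ _ hCKr_ne_top]
            congr 1
            funext t
            ring
    have hVB0 : volume (ball x₀ ρ) ≠ 0 := (measure_ball_pos volume x₀ hρ).ne'
    have hVBtop : volume (ball x₀ ρ) ≠ ∞ := measure_ball_lt_top.ne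
    constructor
    · -- Part 1
      have hscale : volume (ball x₀ (4 * ρ)) =
          ENNReal.ofReal ((4:ℝ) ^ n) * volume (ball x₀ ρ) :=
        vol_ball_scale hn x₀ (by norm_num) hρ.le
      have h4n0 : ENNReal.ofReal ((4:ℝ) ^ n) ≠ 0 := by
        simp [ENNReal.ofReal_eq_zero]
      calc (tentInt r TA (tent x₀ (4 * ρ))) ^ (1/r)
          ≤ ((ENNReal.ofReal CK) ^ r * tentInt r A univ) ^ (1/r) :=
            ENNReal.rpow_le_rpow
              (le_trans (tentInt_mono_set r TA (subset_univ _)) huniv) (by positivity)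
        _ = ENNReal.ofReal CK * (tentInt r A univ) ^ (1/r) := by
            rw [ENNReal.mul_rpow_of_nonneg _ _ (by positivity), ← ENNReal.rpow_mul,
              mul_one_div_cancel hr0.ne', ENNReal.rpow_one]
        _ ≤ ENNReal.ofReal CK * (volume (ball x₀ ρ)) ^ (1/r - 1/q) :=
            mul_le_mul_right hsize _
        _ ≤ C1 * (volume (ball x₀ (4 * ρ))) ^ (1/r - 1/q) := by
            rw [hscale, ENNReal.mul_rpow_of_ne_top ENNReal.ofReal_ne_top hVBtop, hC1]
            apply le_of_eq
            have hone : (ENNReal.ofReal ((4:ℝ)^n)) ^ (1/q - 1/r) *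
                (ENNReal.ofReal ((4:ℝ)^n)) ^ (1/r - 1/q) = 1 := by
              rw [← ENNReal.rpow_add _ _ h4n0 ENNReal.ofReal_ne_top]
              rw [show 1/q - 1/r + (1/r - 1/q) = 0 by ring, ENNReal.rpow_zero]
            calc ENNReal.ofReal CK * (volume (ball x₀ ρ)) ^ (1/r - 1/q)
                = ENNReal.ofReal CK * ((ENNReal.ofReal ((4:ℝ)^n)) ^ (1/q - 1/r) *
                    (ENNReal.ofReal ((4:ℝ)^n)) ^ (1/r - 1/q)) *
                    (volume (ball x₀ ρ)) ^ (1/r - 1/q) := by rw [hone, mul_one]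
              _ = ENNReal.ofReal CK * (ENNReal.ofReal ((4:ℝ)^n)) ^ (1/q - 1/r) *
                  ((ENNReal.ofReal ((4:ℝ)^n)) ^ (1/r - 1/q) *
                    (volume (ball x₀ ρ)) ^ (1/r - 1/q)) := by ring
        _ ≤ (C1 ⊔ C2 ⊔ 1) * (volume (ball x₀ (4 * ρ))) ^ (1/r - 1/q) :=
            mul_le_mul_left (le_sup_of_le_left le_sup_left) _
    · -- Part 2
      intro j hj
      set Sj : Set (Rn n × ℝ) := tent x₀ ((2:ℝ)^(j+1) * ρ) \ tent x₀ ((2:ℝ)^j * ρ) with hSj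
      have h4 : (4:ℝ) ≤ 2^j := by
        calc (4:ℝ) = 2^2 := by norm_num
        _ ≤ 2^j := pow_le_pow_right₀ one_le_two hj
      set D : ℝ := ((2:ℝ)^j - 2) * ρ with hD
      have hD2p : 2 * ρ ≤ D := by rw [hD]; nlinarith
      have hD0 : 0 < D := lt_of_lt_of_le (by linarith) hD2p
      set Mb : ℝ := CK * ρ ^ δ / D ^ ((n:ℝ) + δ) with hMbdef
      have hMb0 : 0 < Mb := by rw [hMbdef]; positivity
      have hrj : (0:ℝ) < (2:ℝ)^(j+1) * ρ := by positivity
      set Vj : ℝ≥0∞ := volume (ball x₀ ((2:ℝ)^(j+1) * ρ)) with hVjdef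
      have hVj0 : Vj ≠ 0 := (measure_ball_pos volume x₀ hrj).ne'
      have hVjtop : Vj ≠ ∞ := measure_ball_lt_top.ne
      have hVBr1top : volume (ball x₀ ρ) ^ (r - 1) ≠ ∞ :=
        (ENNReal.rpow_lt_top_of_nonneg (by linarith) hVBtop).ne
      have hMbr_top : (ENNReal.ofReal Mb) ^ r ≠ ∞ :=
        (ENNReal.rpow_lt_top_of_nonneg hr0.le ENNReal.ofReal_ne_top).ne
      have hslice : ∀ t : ℝ, 0 < t → (∫ x, A x t) = 0 →
          (∫⁻ y, Sj.indicator (fun p => (‖TA p.1 p.2‖₊ : ℝ≥0∞) ^ r) (y, t)) ≤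
          ((ENNReal.ofReal Mb) ^ r * volume (ball x₀ ρ) ^ (r - 1) * gA t) * Vj := by
        intro t ht hmt
        by_cases hgfin : gA t = ∞
        · rw [hgfin, ENNReal.mul_top (mul_ne_zero
            (ENNReal.rpow_pos (ENNReal.ofReal_pos.mpr hMb0) ENNReal.ofReal_ne_top).ne'
            (ENNReal.rpow_pos (measure_ball_pos volume x₀ hρ) hVBtop).ne'),
            ENNReal.top_mul hVj0]
          exact le_top
        · by_cases htp : ρ < t
          · have hA0 : ∀ z, A z t = 0 := by
              intro z
              by_contra h
              exact absurd (htle t z h) (not_le.mpr htp)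
            have hTA0 : ∀ y : Rn n, TA y t = 0 := by
              intro y
              show T (fun z => A z t) y = 0
              have h : (fun z => A z t) = (fun _ => (0:ℝ)) := funext hA0
              rw [h]
              exact T_zero hrep y
            calc (∫⁻ y, Sj.indicator (fun p => (‖TA p.1 p.2‖₊ : ℝ≥0∞) ^ r) (y, t))
                ≤ ∫⁻ _ : Rn n, (0:ℝ≥0∞) := by
                  refine lintegral_mono fun y => ?_
                  refine le_trans (Set.indicator_le_self _ _ _) ?_
                  rw [show (‖TA y t‖₊ : ℝ≥0∞) ^ r = 0 by
                    rw [hTA0 y]; simp [ENNReal.zero_rpow_of_pos hr0]]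
              _ = 0 := lintegral_zero
              _ ≤ _ := zero_le
          · push_neg at htp
            have hmem := memLp_slice (hAt t) hr hgfin
            have hholder := holder_step (hAt t) hr (hcls t)
            have hintf : Integrable (fun z => A z t) volume := by
              refine ⟨(hAt t).aestronglyMeasurable, ?_⟩
              have hlt : (∫⁻ z, (‖A z t‖₊ : ℝ≥0∞)) < ∞ :=
                lt_of_le_of_lt hholder (ENNReal.mul_lt_top
                  (ENNReal.rpow_lt_top_of_nonneg (by positivity) hgfin)
                  (ENNReal.rpow_lt_top_of_nonneg (by
                    have : 1/r < 1 := by rw [div_lt_one hr0]; exact hr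
                    linarith) hVBtop))
              exact hlt
            have hpt : ∀ y : Rn n, Sj.indicator (fun p => (‖TA p.1 p.2‖₊ : ℝ≥0∞) ^ r) (y, t) ≤
                (ball x₀ ((2:ℝ)^(j+1) * ρ)).indicator
                  (fun _ => (ENNReal.ofReal Mb) ^ r * volume (ball x₀ ρ) ^ (r - 1) * gA t) y := by
              intro y
              by_cases hyS : (y, t) ∈ Sj
              · obtain ⟨hin, hout⟩ := id hyS
                obtain ⟨hin1, hin2⟩ := mem_tent_iff.mp hin
                have hball : y ∈ ball x₀ ((2:ℝ)^(j+1) * ρ) :=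
                  mem_ball_of_tent (p := (y, t)) ⟨hin1, hin2⟩
                have hinf : infDist y (ball x₀ ((2:ℝ)^j * ρ))ᶜ < t := by
                  by_contra hcon
                  push_neg at hcon
                  exact hout (mem_tent_iff.mpr ⟨ht, hcon⟩)
                have hgeo : ((2:ℝ)^j * ρ) - dist y x₀ ≤ infDist y (ball x₀ ((2:ℝ)^j * ρ))ᶜ :=
                  infDist_compl_ball_ge hn (by positivity)
                have hdist : D + ρ ≤ dist y x₀ := by
                  rw [hD]; nlinarith
                have hTb := kernel_bound hδ0 hCK hsmooth hrep hmem hintf hmt hρ (hcls t)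
                  hD2p hdist
                rw [Set.indicator_of_mem hyS, Set.indicator_of_mem hball]
                calc (‖TA y t‖₊ : ℝ≥0∞) ^ r
                    ≤ (ENNReal.ofReal Mb *
                        ((gA t) ^ (1/r) * volume (ball x₀ ρ) ^ (1 - 1/r))) ^ r := by
                      refine ENNReal.rpow_le_rpow ?_ hr0.le
                      refine le_trans ?_ (mul_le_mul_right hholder _)
                      exact hTb
                  _ = (ENNReal.ofReal Mb) ^ r * volume (ball x₀ ρ) ^ (r - 1) * gA t := by
                      rw [ENNReal.mul_rpow_of_nonneg _ _ hr0.le,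
                        ENNReal.mul_rpow_of_nonneg _ _ hr0.le, ← ENNReal.rpow_mul,
                        ← ENNReal.rpow_mul, one_div_mul_cancel hr0.ne', ENNReal.rpow_one,
                        show (1 - 1/r) * r = r - 1 by field_simp]
                      ring
              · rw [Set.indicator_of_notMem hyS]
                exact zero_le
            calc (∫⁻ y, Sj.indicator (fun p => (‖TA p.1 p.2‖₊ : ℝ≥0∞) ^ r) (y, t))
                ≤ ∫⁻ y, (ball x₀ ((2:ℝ)^(j+1) * ρ)).indicator
                    (fun _ => (ENNReal.ofReal Mb) ^ r * volume (ball x₀ ρ) ^ (r - 1) * gA t) y :=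
                  lintegral_mono hpt
              _ = ((ENNReal.ofReal Mb) ^ r * volume (ball x₀ ρ) ^ (r - 1) * gA t) * Vj := by
                  rw [lintegral_indicator measurableSet_ball, setLIntegral_const]
      have hTAint : tentInt r TA Sj ≤
          ((ENNReal.ofReal Mb) ^ r * volume (ball x₀ ρ) ^ (r - 1) * Vj) * tentInt r A univ := by
        rw [htent_univ]
        calc tentInt r TA Sj
            ≤ ∫⁻ t in Ioi 0, (((ENNReal.ofReal Mb) ^ r * volume (ball x₀ ρ) ^ (r - 1) * gA t) *
                Vj) * ENNReal.ofReal t⁻¹ := by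
              refine lintegral_mono_ae ?_
              filter_upwards [hmean, ae_restrict_mem measurableSet_Ioi] with t hmt ht
              exact mul_le_mul_left (hslice t ht hmt) _
          _ = ((ENNReal.ofReal Mb) ^ r * volume (ball x₀ ρ) ^ (r - 1) * Vj) *
              ∫⁻ t in Ioi 0, gA t * ENNReal.ofReal t⁻¹ := by
            rw [← lintegral_const_mul' _ _
              (ENNReal.mul_ne_top (ENNReal.mul_ne_top hMbr_top hVBr1top) hVjtop)]
            congr 1
            funext t
            ring
      have hfinal : tentInt r TA Sj ≤
          ((ENNReal.ofReal Mb) ^ r * volume (ball x₀ ρ) ^ (r - 1) * Vj) *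
            volume (ball x₀ ρ) ^ ((1/r - 1/q) * r) :=
        le_trans hTAint (mul_le_mul_right hAuniv _)
      have hkey : ENNReal.ofReal Mb * volume (ball x₀ ρ) ^ (1 - 1/q) * Vj ^ (1/q) ≤
          C2 * ENNReal.ofReal ((2:ℝ) ^ (-((j:ℝ) + 1) * ((n:ℝ) + δ - n / q))) := by
        have hVjeq : Vj = ENNReal.ofReal (((2:ℝ)^(j+1)) ^ n) * volume (ball x₀ ρ) := by
          rw [hVjdef]
          exact vol_ball_scale hn x₀ (by positivity) hρ.le
        have hVBeq : volume (ball x₀ ρ) = ENNReal.ofReal (ρ ^ n) * V := by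
          rw [hV]
          exact vol_ball_eq hn x₀ hρ.le
        rw [hVjeq, ENNReal.mul_rpow_of_ne_top ENNReal.ofReal_ne_top hVBtop]
        have hVBcomb : volume (ball x₀ ρ) ^ (1 - 1/q) * volume (ball x₀ ρ) ^ (1/q) =
            volume (ball x₀ ρ) := by
          rw [← ENNReal.rpow_add _ _ hVB0 hVBtop,
            show (1 - 1/q) + 1/q = 1 by ring, ENNReal.rpow_one]
        calc ENNReal.ofReal Mb * volume (ball x₀ ρ) ^ (1 - 1/q) *
              ((ENNReal.ofReal (((2:ℝ)^(j+1)) ^ n)) ^ (1/q) * volume (ball x₀ ρ) ^ (1/q))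
            = ENNReal.ofReal Mb * (ENNReal.ofReal (((2:ℝ)^(j+1)) ^ n)) ^ (1/q) *
              (volume (ball x₀ ρ) ^ (1 - 1/q) * volume (ball x₀ ρ) ^ (1/q)) := by ring
          _ = ENNReal.ofReal Mb * (ENNReal.ofReal (((2:ℝ)^(j+1)) ^ n)) ^ (1/q) *
              (ENNReal.ofReal (ρ ^ n) * V) := by rw [hVBcomb, hVBeq]
          _ = ENNReal.ofReal (Mb * ((((2:ℝ)^(j+1)) ^ n) ^ (1/q)) * ρ ^ n) * V := by
              rw [ENNReal.ofReal_mul (mul_nonneg hMb0.le (by positivity)),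
                ENNReal.ofReal_mul hMb0.le, ENNReal.ofReal_rpow_of_pos (by positivity)]
              ring
          _ ≤ ENNReal.ofReal (CK * 2 ^ (2*((n:ℝ)+δ)) *
                2 ^ (-((j:ℝ)+1) * ((n:ℝ)+δ-(n:ℝ)/q))) * V := by
              refine mul_le_mul_left (ENNReal.ofReal_le_ofReal ?_) V
              rw [hMbdef, hD]
              exact scalar_step hq0 hδ0 hρ hCK hj
          _ = C2 * ENNReal.ofReal ((2:ℝ) ^ (-((j:ℝ) + 1) * ((n:ℝ) + δ - n / q))) := by
              rw [hC2, ENNReal.ofReal_mul (by positivity)]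
              ring
      calc (tentInt r TA Sj) ^ (1/r)
          ≤ (((ENNReal.ofReal Mb) ^ r * volume (ball x₀ ρ) ^ (r - 1) * Vj) *
              volume (ball x₀ ρ) ^ ((1/r - 1/q) * r)) ^ (1/r) :=
            ENNReal.rpow_le_rpow hfinal (by positivity)
        _ = ENNReal.ofReal Mb * volume (ball x₀ ρ) ^ (1 - 1/q) * Vj ^ (1/r) := by
            rw [ENNReal.mul_rpow_of_nonneg _ _ (by positivity : (0:ℝ) ≤ 1/r),
              ENNReal.mul_rpow_of_nonneg _ _ (by positivity : (0:ℝ) ≤ 1/r),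
              ENNReal.mul_rpow_of_nonneg _ _ (by positivity : (0:ℝ) ≤ 1/r),
              ← ENNReal.rpow_mul, ← ENNReal.rpow_mul, ← ENNReal.rpow_mul,
              mul_one_div_cancel hr0.ne', ENNReal.rpow_one,
              show (r - 1) * (1/r) = 1 - 1/r by field_simp,
              show ((1/r - 1/q) * r) * (1/r) = 1/r - 1/q by field_simp,
              show (1:ℝ) - 1/q = (1 - 1/r) + (1/r - 1/q) by ring,
              ENNReal.rpow_add _ _ hVB0 hVBtop]
            ring
        _ = (ENNReal.ofReal Mb * volume (ball x₀ ρ) ^ (1 - 1/q) * Vj ^ (1/q)) *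
              Vj ^ (1/r - 1/q) := by
            rw [show (1:ℝ)/r = 1/q + (1/r - 1/q) by ring,
              ENNReal.rpow_add _ _ hVj0 hVjtop]
            ring
        _ ≤ (C2 * ENNReal.ofReal ((2:ℝ) ^ (-((j:ℝ) + 1) * ((n:ℝ) + δ - n / q)))) *
              Vj ^ (1/r - 1/q) := mul_le_mul_left hkey _
        _ ≤ (C1 ⊔ C2 ⊔ 1) * ENNReal.ofReal ((2:ℝ) ^ (-((j:ℝ) + 1) * ((n:ℝ) + δ - n / q))) *
              Vj ^ (1/r - 1/q) := by
            refine mul_le_mul_left (mul_le_mul_left ?_ _) _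
            exact le_sup_of_le_left le_sup_right
end
end

section
/- Let 1 ≤ r < ∞, 0 < p < ∞, and t > 0. Define i_t(f)(x,s) = f(x)·1_{[t,et]}(s) and π_t(G)(x) = ∫_t^{et} G(x,s) ds/s. Then π_t ∘ i_t = Id on functions on ℝⁿ; moreover i_t maps the slice-space (E^p_r)_t boundedly into the tent space T^p_r and π_t maps T^p_r boundedly into (E^p_r)_t, with operator norms bounded by constants depending only on n, p, r (uniform in t). In particular (E^p_r)_t is a retract of T^p_r. -/
open MeasureTheory Metric Set ENNReal
open scoped NNReal

noncomputable section

variable {n : ℕ}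

lemma exp_one_pos' : (1:ℝ) ≤ Real.exp 1 := by have := Real.exp_one_gt_d9; linarith

lemma het' {t : ℝ} (ht : 0 < t) : t ≤ Real.exp 1 * t := le_mul_of_one_le_left ht.le exp_one_pos'

lemma log_int {t : ℝ} (ht : 0 < t) : ∫ s in Ioc t (Real.exp 1 * t), s⁻¹ = 1 := by
  have het : t ≤ Real.exp 1 * t := het' ht
  have h0 : (0:ℝ) ∉ uIcc t (Real.exp 1 * t) := by
    rw [uIcc_of_le het]
    intro h
    exact absurd h.1 (not_le.mpr ht)
  rw [← intervalIntegral.integral_of_le het, integral_inv h0]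
  rw [mul_div_assoc, div_self ht.ne', mul_one, Real.log_exp]

lemma inv_intOn {t : ℝ} (ht : 0 < t) :
    IntegrableOn (fun s : ℝ => s⁻¹) (Ioc t (Real.exp 1 * t)) := by
  have h0 : (0:ℝ) ∉ uIcc t (Real.exp 1 * t) := by
    rw [uIcc_of_le (het' ht)]
    intro h
    exact absurd h.1 (not_le.mpr ht)
  exact (intervalIntegrable_inv_iff.mpr (Or.inr h0)).1

lemma log_lint {t : ℝ} (ht : 0 < t) :
    ∫⁻ s in Ioc t (Real.exp 1 * t), ENNReal.ofReal s⁻¹ = 1 := by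
  rw [← ofReal_integral_eq_lintegral_ofReal (inv_intOn ht)
    (ae_restrict_of_forall_mem measurableSet_Ioc fun s hs => inv_nonneg.mpr (ht.trans hs.1).le), log_int ht]
  simp

lemma part1 {n : ℕ} {t : ℝ} (ht : 0 < t) (f : Rn n → ℝ) : piMap t (iMap t f) = f := by
  funext x
  unfold piMap iMap
  have : ∀ s ∈ Ioc t (Real.exp 1 * t),
      (if s ∈ Icc t (Real.exp 1 * t) then f x else 0) / s = f x * s⁻¹ := by
    intro s hs
    rw [if_pos ⟨hs.1.le, hs.2⟩, div_eq_mul_inv]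
  rw [setIntegral_congr_fun measurableSet_Ioc this, integral_const_mul, log_int ht, mul_one]


lemma vol_ball (x : Rn n) {t : ℝ} (ht : 0 < t) :
    volume (ball x t) = ENNReal.ofReal (t ^ n) * volume (ball (0 : Rn n) 1) := by
  rcases Nat.eq_zero_or_pos n with hn | hn
  · subst hn
    have h1 : ball x t = univ := by
      ext y; simp [mem_ball, Subsingleton.elim y x, ht]
    have h2 : ball (0 : Rn 0) 1 = univ := by
      ext y; simp [mem_ball, Subsingleton.elim y (0 : Rn 0)]
    simp [h1, h2]
  · have : Nontrivial (Rn n) := by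
      apply Module.nontrivial_of_finrank_pos (R := ℝ)
      rw [finrank_euclideanSpace_fin]; exact hn
    rw [Measure.addHaar_ball volume x ht.le, finrank_euclideanSpace_fin]

lemma cn_pos : 0 < volume (ball (0 : Rn n) 1) := measure_ball_pos _ _ one_pos
lemma cn_fin : volume (ball (0 : Rn n) 1) ≠ ∞ := measure_ball_lt_top.ne

lemma mble_ballint {h : Rn n → ℝ≥0∞} (hh : Measurable h) (ρ : ℝ) :
    Measurable fun z : Rn n => ∫⁻ y in ball z ρ, h y := by
  have : ∀ z : Rn n, ∫⁻ y in ball z ρ, h y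
      = ∫⁻ y, ({q : Rn n × Rn n | dist q.2 q.1 < ρ}.indicator (fun q => h q.2)) (z, y) := by
    intro z
    rw [← lintegral_indicator measurableSet_ball]
    refine lintegral_congr fun y => ?_
    by_cases hy : y ∈ ball z ρ
    · rw [Set.indicator_of_mem hy, Set.indicator_of_mem (show ((z,y) : Rn n × Rn n) ∈ _ from mem_ball.mp hy)]
    · rw [Set.indicator_of_notMem hy, Set.indicator_of_notMem (fun h => hy (mem_ball.mpr (by exact h)))]
  simp_rw [this]
  apply Measurable.lintegral_prod_right
  exact (hh.comp measurable_snd).indicator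
    (measurableSet_lt (measurable_dist.comp (measurable_snd.prodMk measurable_fst)) measurable_const)

lemma cover : ∃ F : Finset (Rn n), ∀ z : Rn n, ‖z‖ < Real.exp 1 → ∃ v ∈ F, dist z v < 1 := by
  obtain ⟨F, hF⟩ := (isCompact_closedBall (0 : Rn n) (Real.exp 1)).elim_finite_subcover
    (fun v : Rn n => ball v 1) (fun v => isOpen_ball)
    (fun y hy => mem_iUnion.mpr ⟨y, mem_ball_self one_pos⟩)
  refine ⟨F, fun z hz => ?_⟩
  have : z ∈ closedBall (0 : Rn n) (Real.exp 1) := by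
    simpa [mem_closedBall, dist_zero_right] using hz.le
  obtain ⟨v, hv, hzv⟩ := mem_iUnion₂.mp (hF this)
  exact ⟨v, hv, mem_ball.mp hzv⟩

lemma sum_rpow_le {ι : Type*} (F : Finset ι) (a : ι → ℝ≥0∞) {q : ℝ} (hq : 0 < q) :
    (∑ v ∈ F, a v) ^ q ≤ (F.card : ℝ≥0∞) ^ q * ∑ v ∈ F, a v ^ q := by
  rcases F.eq_empty_or_nonempty with rfl | hne
  · simp [ENNReal.zero_rpow_of_pos hq]
  obtain ⟨v₀, hv₀, hsup⟩ := Finset.exists_mem_eq_sup F hne a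
  calc (∑ v ∈ F, a v) ^ q ≤ ((F.card : ℝ≥0∞) * a v₀) ^ q := by
        apply ENNReal.rpow_le_rpow _ hq.le
        rw [← nsmul_eq_mul]
        exact Finset.sum_le_card_nsmul F a (a v₀) (fun v hv => hsup ▸ Finset.le_sup hv)
    _ = (F.card : ℝ≥0∞) ^ q * a v₀ ^ q := ENNReal.mul_rpow_of_nonneg _ _ hq.le
    _ ≤ _ := by
        apply mul_le_mul_right
        exact ENNReal.rpow_le_rpow (Finset.le_sup hv₀) hq.le |>.trans_eq (by rw [hsup]) |>.trans
          (Finset.single_le_sum (fun v _ => zero_le) hv₀)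


lemma rpow_neg_nat {s : ℝ} (hs : 0 < s) (n : ℕ) : s ^ (-(n:ℝ)-1) = (s^(n+1))⁻¹ := by
  rw [show -(n:ℝ)-1 = -((n+1 : ℕ):ℝ) by push_cast; ring, Real.rpow_neg hs.le, Real.rpow_natCast]

lemma inv_le_aux {E t s : ℝ} (n : ℕ) (ht : 0 < t) (h1 : t < s) (h2 : s ≤ E * t) :
    s⁻¹ ≤ E^n * t^n * (s^(n+1))⁻¹ := by
  have hs : 0 < s := ht.trans h1
  rw [← mul_pow, ← div_eq_mul_inv, le_div_iff₀ (pow_pos hs _)]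
  calc s⁻¹ * s^(n+1) = s^n := by
        rw [pow_succ']
        field_simp
    _ ≤ (E*t)^n := pow_le_pow_left₀ hs.le h2 n

section
variable {α : Type*} [MeasurableSpace α] {μ : Measure α}

lemma jensen {f w : α → ℝ≥0∞} (hf : AEMeasurable f μ) (hw : AEMeasurable w μ)
    {r : ℝ} (hr : 1 ≤ r) (hw1 : ∫⁻ a, w a ∂μ = 1) :
    (∫⁻ a, f a * w a ∂μ) ^ r ≤ ∫⁻ a, f a ^ r * w a ∂μ := by
  rcases eq_or_lt_of_le hr with h1 | h1
  · simp only [← h1, ENNReal.rpow_one]; exact le_refl _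
  have hpq : Real.HolderConjugate r (r / (r - 1)) := Real.HolderConjugate.conjExponent h1
  have hr0 : r ≠ 0 := by positivity
  have hq0 : r / (r - 1) ≠ 0 := hpq.symm.pos.ne'
  have key : (∫⁻ a, f a * w a ∂μ) ≤ (∫⁻ a, f a ^ r * w a ∂μ) ^ (1 / r) := by
    have heq : ∀ a, f a * w a = (f a * w a ^ (1/r)) * (w a ^ (1/(r/(r-1)))) := by
      intro a
      rw [mul_assoc, ← ENNReal.rpow_add_of_nonneg _ _ (by positivity) (le_of_lt (one_div_pos.mpr hpq.symm.pos))]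
      rw [one_div, one_div, hpq.inv_add_inv_eq_one, ENNReal.rpow_one]
    calc ∫⁻ a, f a * w a ∂μ = ∫⁻ a, ((fun a => f a * w a ^ (1/r)) * fun a => w a ^ (1/(r/(r-1)))) a ∂μ := by
          simp only [Pi.mul_apply]; exact lintegral_congr heq
      _ ≤ (∫⁻ a, (f a * w a ^ (1/r)) ^ r ∂μ) ^ (1/r) *
            (∫⁻ a, (w a ^ (1/(r/(r-1)))) ^ (r/(r-1)) ∂μ) ^ (1/(r/(r-1))) :=
          ENNReal.lintegral_mul_le_Lp_mul_Lq μ hpq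
            (hf.mul (hw.pow_const _)) (hw.pow_const _)
      _ = (∫⁻ a, f a ^ r * w a ∂μ) ^ (1/r) := by
          have e1 : ∀ a : α, (f a * w a ^ (1/r)) ^ r = f a ^ r * w a := by
            intro a
            rw [ENNReal.mul_rpow_of_nonneg _ _ (by positivity), ← ENNReal.rpow_mul,
              one_div, inv_mul_cancel₀ hr0, ENNReal.rpow_one]
          have e2 : ∀ a : α, (w a ^ (1/(r/(r-1)))) ^ (r/(r-1)) = w a := by
            intro a
            rw [← ENNReal.rpow_mul, one_div, inv_mul_cancel₀ hq0, ENNReal.rpow_one]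
          simp only [e1, e2, hw1, ENNReal.one_rpow, mul_one]
  calc (∫⁻ a, f a * w a ∂μ) ^ r ≤ ((∫⁻ a, f a ^ r * w a ∂μ) ^ (1/r)) ^ r :=
        ENNReal.rpow_le_rpow key (by positivity)
    _ = ∫⁻ a, f a ^ r * w a ∂μ := by
        rw [← ENNReal.rpow_mul, one_div, inv_mul_cancel₀ hr0, ENNReal.rpow_one]

end

lemma pibound {n : ℕ} {p r : ℝ} (hr : 1 ≤ r) (hp : 0 < p) {t : ℝ} (ht : 0 < t)
    (G : Rn n → ℝ → ℝ) (hG : Measurable (Function.uncurry G)) :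
    sliceNorm p r t (piMap t G) ≤
      ((volume (ball (0:Rn n) 1))⁻¹ * ENNReal.ofReal (Real.exp 1 ^ n)) ^ (1/r)
        * tentNorm p r (enn G) := by
  set E := Real.exp 1 with hE
  set c : ℝ≥0∞ := volume (ball (0:Rn n) 1) with hc
  set K : ℝ≥0∞ := c⁻¹ * ENNReal.ofReal (E ^ n) with hK
  have hr0 : (0:ℝ) < r := lt_of_lt_of_le one_pos hr
  have hKfin : K ≠ ∞ := by
    rw [hK]
    exact ENNReal.mul_ne_top (ENNReal.inv_ne_top.mpr cn_pos.ne') ofReal_ne_top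
  -- pointwise bound on the sliced average
  have key : ∀ x : Rn n,
      (volume (ball x t))⁻¹ * ∫⁻ y in ball x t, ((‖piMap t G y‖₊ : ℝ≥0∞)) ^ r
        ≤ K * (conical r (enn G) x) ^ r := by
    intro x
    have hmG : ∀ y : Rn n, Measurable fun s : ℝ => (‖G y s‖₊ : ℝ≥0∞) :=
      fun y => (hG.comp measurable_prodMk_left).nnnorm.coe_nnreal_ennreal
    -- step a : pointwise in y
    have stepa : ∀ y : Rn n, ((‖piMap t G y‖₊ : ℝ≥0∞)) ^ r
        ≤ ∫⁻ s in Ioc t (E * t), (‖G y s‖₊ : ℝ≥0∞) ^ r * ENNReal.ofReal s⁻¹ := by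
      intro y
      have h1 : ((‖piMap t G y‖₊ : ℝ≥0∞))
          ≤ ∫⁻ s in Ioc t (E * t), (‖G y s‖₊ : ℝ≥0∞) * ENNReal.ofReal s⁻¹ := by
        refine (enorm_integral_le_lintegral_enorm _).trans_eq ?_
        refine setLIntegral_congr_fun measurableSet_Ioc (fun s hs => ?_)
        have hs0 : (0:ℝ) < s := ht.trans hs.1
        rw [div_eq_mul_inv, enorm_mul,
          Real.enorm_eq_ofReal (inv_nonneg.mpr hs0.le)]
        rfl
      calc ((‖piMap t G y‖₊ : ℝ≥0∞)) ^ r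
          ≤ (∫⁻ s in Ioc t (E * t), (‖G y s‖₊ : ℝ≥0∞) * ENNReal.ofReal s⁻¹) ^ r :=
            ENNReal.rpow_le_rpow h1 hr0.le
        _ ≤ _ := jensen ((hmG y).aemeasurable) (measurable_inv.ennreal_ofReal.aemeasurable)
            hr (log_lint ht)
    -- step b : integrate over the ball and swap
    have swap : ∫⁻ y in ball x t, ∫⁻ s in Ioc t (E * t),
          (‖G y s‖₊ : ℝ≥0∞) ^ r * ENNReal.ofReal s⁻¹
        = ∫⁻ s in Ioc t (E * t), ∫⁻ y in ball x t,
          (‖G y s‖₊ : ℝ≥0∞) ^ r * ENNReal.ofReal s⁻¹ := by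
      apply lintegral_lintegral_swap
      apply Measurable.aemeasurable
      apply Measurable.mul
      · exact (hG.nnnorm.coe_nnreal_ennreal).pow_const r
      · exact measurable_snd.inv.ennreal_ofReal
    have stepb : ∫⁻ y in ball x t, ((‖piMap t G y‖₊ : ℝ≥0∞)) ^ r
        ≤ ENNReal.ofReal (E^n * t^n) * ∫⁻ s in Ioi (0:ℝ),
            (∫⁻ y in ball x s, (‖G y s‖₊ : ℝ≥0∞) ^ r) * ENNReal.ofReal (s ^ (-(n:ℝ)-1)) := by
      calc ∫⁻ y in ball x t, ((‖piMap t G y‖₊ : ℝ≥0∞)) ^ r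
          ≤ ∫⁻ y in ball x t, ∫⁻ s in Ioc t (E*t),
              (‖G y s‖₊ : ℝ≥0∞) ^ r * ENNReal.ofReal s⁻¹ := lintegral_mono fun y => stepa y
        _ = ∫⁻ s in Ioc t (E*t), ∫⁻ y in ball x t,
              (‖G y s‖₊ : ℝ≥0∞) ^ r * ENNReal.ofReal s⁻¹ := swap
        _ = ∫⁻ s in Ioc t (E*t), (∫⁻ y in ball x t,
              (‖G y s‖₊ : ℝ≥0∞) ^ r) * ENNReal.ofReal s⁻¹ :=
            lintegral_congr fun s => lintegral_mul_const' _ _ ofReal_ne_top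
        _ ≤ ∫⁻ s in Ioc t (E*t), ENNReal.ofReal (E^n * t^n) *
              ((∫⁻ y in ball x s, (‖G y s‖₊ : ℝ≥0∞) ^ r) * ENNReal.ofReal (s ^ (-(n:ℝ)-1))) := by
            refine lintegral_mono_ae (ae_restrict_of_forall_mem measurableSet_Ioc
              fun s hs => ?_)
            have hs0 : (0:ℝ) < s := ht.trans hs.1
            rw [mul_comm (ENNReal.ofReal (E^n * t^n)), mul_assoc]
            refine mul_le_mul' (lintegral_mono_set (ball_subset_ball hs.1.le)) ?_
            rw [rpow_neg_nat hs0 n, ← ENNReal.ofReal_mul (by positivity)]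
            exact ENNReal.ofReal_le_ofReal
              (by rw [mul_comm]; exact inv_le_aux n ht hs.1 hs.2)
        _ = ENNReal.ofReal (E^n * t^n) * ∫⁻ s in Ioc t (E*t),
              (∫⁻ y in ball x s, (‖G y s‖₊ : ℝ≥0∞) ^ r) * ENNReal.ofReal (s ^ (-(n:ℝ)-1)) :=
            lintegral_const_mul' _ _ ofReal_ne_top
        _ ≤ _ := by
            refine mul_le_mul_right (lintegral_mono' (Measure.restrict_mono ?_ le_rfl) le_rfl) _
            exact fun s hs => ht.trans hs.1
    -- conclude
    have hvol : volume (ball x t) = ENNReal.ofReal (t^n) * c := vol_ball x ht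
    have hconr : (conical r (enn G) x) ^ r = ∫⁻ s in Ioi (0:ℝ),
        (∫⁻ y in ball x s, (‖G y s‖₊ : ℝ≥0∞) ^ r) * ENNReal.ofReal (s ^ (-(n:ℝ)-1)) := by
      rw [conical, ← ENNReal.rpow_mul, one_div, inv_mul_cancel₀ hr0.ne', ENNReal.rpow_one]
      rfl
    calc (volume (ball x t))⁻¹ * ∫⁻ y in ball x t, ((‖piMap t G y‖₊ : ℝ≥0∞)) ^ r
        ≤ (volume (ball x t))⁻¹ * (ENNReal.ofReal (E^n * t^n) * (conical r (enn G) x) ^ r) := by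
          rw [hconr]; exact mul_le_mul_right stepb _
      _ = K * (conical r (enn G) x) ^ r := by
          rw [hvol, ← mul_assoc]
          congr 1
          rw [hK, ENNReal.mul_inv (Or.inl (by positivity)) (Or.inl ofReal_ne_top),
            ENNReal.ofReal_mul (by positivity)]
          calc (ENNReal.ofReal (t^n))⁻¹ * c⁻¹ * (ENNReal.ofReal (E^n) * ENNReal.ofReal (t^n))
              = c⁻¹ * ENNReal.ofReal (E^n) * ((ENNReal.ofReal (t^n))⁻¹ * ENNReal.ofReal (t^n)) := by
                ring
            _ = c⁻¹ * ENNReal.ofReal (E^n) := by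
                rw [ENNReal.inv_mul_cancel (by positivity) ofReal_ne_top, mul_one]
  -- integrate the pointwise bound
  rw [sliceNorm, tentNorm]
  have hq : (0:ℝ) ≤ p / r := by positivity
  calc (∫⁻ x, ((volume (ball x t))⁻¹ * ∫⁻ y in ball x t, (‖piMap t G y‖₊ : ℝ≥0∞) ^ r) ^ (p/r)) ^ (1/p)
      ≤ (∫⁻ x, (K * (conical r (enn G) x) ^ r) ^ (p/r)) ^ (1/p) :=
        ENNReal.rpow_le_rpow (lintegral_mono fun x => ENNReal.rpow_le_rpow (key x) hq)
          (by positivity)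
    _ = (K ^ (p/r) * ∫⁻ x, (conical r (enn G) x) ^ p) ^ (1/p) := by
        congr 1
        rw [← lintegral_const_mul' _ _ (ENNReal.rpow_ne_top_of_nonneg hq hKfin)]
        refine lintegral_congr fun x => ?_
        rw [ENNReal.mul_rpow_of_nonneg _ _ hq, ← ENNReal.rpow_mul,
          mul_div_cancel₀ p hr0.ne']
    _ = K ^ (1/r) * (∫⁻ x, (conical r (enn G) x) ^ p) ^ (1/p) := by
        rw [ENNReal.mul_rpow_of_nonneg _ _ (by positivity : (0:ℝ) ≤ 1/p), ← ENNReal.rpow_mul]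
        congr 2
        rw [div_mul_eq_mul_div, mul_one_div, div_div]
        rw [div_eq_div_iff (by positivity) hr0.ne']
        ring

lemma ibound {n : ℕ} {p r : ℝ} (hr : 1 ≤ r) (hp : 0 < p) :
    ∃ C : ℝ≥0∞, C ≠ ∞ ∧ ∀ (t : ℝ), 0 < t → ∀ f : Rn n → ℝ, Measurable f →
      tentNorm p r (enn (iMap t f)) ≤ C * sliceNorm p r t f := by
  obtain ⟨F, hF⟩ := cover (n := n)
  set E := Real.exp 1 with hE
  set c : ℝ≥0∞ := volume (ball (0:Rn n) 1) with hc
  set N : ℝ≥0∞ := (F.card : ℝ≥0∞) with hN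
  set K₂ : ℝ≥0∞ := ENNReal.ofReal (E - 1) * c with hK2
  have hr0 : (0:ℝ) < r := lt_of_lt_of_le one_pos hr
  have hq : (0:ℝ) < p / r := by positivity
  have hK2fin : K₂ ≠ ∞ := ENNReal.mul_ne_top ofReal_ne_top cn_fin
  have hNfin : N ≠ ∞ := natCast_ne_top _
  refine ⟨(K₂ ^ (p/r) * N ^ (p/r) * N) ^ (1/p), ?_, ?_⟩
  · refine ENNReal.rpow_ne_top_of_nonneg (by positivity) ?_
    exact ENNReal.mul_ne_top (ENNReal.mul_ne_top
      (ENNReal.rpow_ne_top_of_nonneg hq.le hK2fin)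
      (ENNReal.rpow_ne_top_of_nonneg hq.le hNfin)) hNfin
  intro t ht f hf
  have hvolB : (0:ℝ≥0∞) < ENNReal.ofReal (t^n) * c :=
    ENNReal.mul_pos (by positivity) cn_pos.ne'
  have hvolBfin : ENNReal.ofReal (t^n) * c ≠ ∞ := ENNReal.mul_ne_top ofReal_ne_top cn_fin
  set Av : Rn n → Rn n → ℝ≥0∞ := fun v x =>
    (ENNReal.ofReal (t^n) * c)⁻¹ * ∫⁻ y in ball (x + t • v) t, (‖f y‖₊ : ℝ≥0∞) ^ r with hAv
  -- covering of the dilated ball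
  have cover' : ∀ x : Rn n, ball x (E * t) ⊆ ⋃ v ∈ F, ball (x + t • v) t := by
    intro x y hy
    set z : Rn n := t⁻¹ • (y - x) with hz
    have hzn : ‖z‖ < E := by
      rw [hz, norm_smul, norm_inv, Real.norm_of_nonneg ht.le]
      rw [mem_ball, dist_eq_norm] at hy
      calc t⁻¹ * ‖y - x‖ < t⁻¹ * (E * t) := by
            exact mul_lt_mul_of_pos_left hy (inv_pos.mpr ht)
        _ = E := by field_simp
    obtain ⟨v, hv, hzv⟩ := hF z hzn
    refine mem_biUnion hv ?_
    rw [mem_ball, dist_eq_norm]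
    have : y - (x + t • v) = t • (z - v) := by
      rw [hz, smul_sub, smul_inv_smul₀ ht.ne']
      abel
    rw [this, norm_smul, Real.norm_of_nonneg ht.le]
    calc t * ‖z - v‖ < t * 1 := by
          refine mul_lt_mul_of_pos_left ?_ ht
          rw [← dist_eq_norm]; exact hzv
      _ = t := mul_one t
  -- pointwise bound on the conical functional
  have key : ∀ x : Rn n,
      (conical r (enn (iMap t f)) x) ^ r ≤ K₂ * ∑ v ∈ F, Av v x := by
    intro x
    have hconr : (conical r (enn (iMap t f)) x) ^ r = ∫⁻ s in Ioi (0:ℝ),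
        (∫⁻ y in ball x s, ((‖iMap t f y s‖₊ : ℝ≥0∞)) ^ r) * ENNReal.ofReal (s ^ (-(n:ℝ)-1)) := by
      rw [conical, ← ENNReal.rpow_mul, one_div, inv_mul_cancel₀ hr0.ne', ENNReal.rpow_one]
      rfl
    set B : ℝ≥0∞ := (∫⁻ y in ball x (E * t), (‖f y‖₊ : ℝ≥0∞) ^ r)
      * ENNReal.ofReal (t ^ (-(n:ℝ)-1)) with hB
    have ptb : ∀ s : ℝ,
        (∫⁻ y in ball x s, ((‖iMap t f y s‖₊ : ℝ≥0∞)) ^ r) * ENNReal.ofReal (s ^ (-(n:ℝ)-1))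
        ≤ (Icc t (E * t)).indicator (fun _ => B) s := by
      intro s
      by_cases hs : s ∈ Icc t (E * t)
      · rw [indicator_of_mem hs, hB]
        have hs0 : (0:ℝ) < s := lt_of_lt_of_le ht hs.1
        have heq : ∀ y : Rn n, ((‖iMap t f y s‖₊ : ℝ≥0∞)) ^ r = (‖f y‖₊ : ℝ≥0∞) ^ r := by
          intro y; rw [iMap, if_pos hs]
        refine mul_le_mul' ?_ ?_
        · calc ∫⁻ y in ball x s, ((‖iMap t f y s‖₊ : ℝ≥0∞)) ^ r
              = ∫⁻ y in ball x s, (‖f y‖₊ : ℝ≥0∞) ^ r := lintegral_congr heq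
            _ ≤ _ := lintegral_mono_set (ball_subset_ball hs.2)
        · rw [rpow_neg_nat hs0 n, rpow_neg_nat ht n]
          exact ENNReal.ofReal_le_ofReal
            (inv_anti₀ (by positivity) (pow_le_pow_left₀ ht.le hs.1 (n+1)))
      · rw [indicator_of_notMem hs]
        have heq : ∀ y : Rn n, ((‖iMap t f y s‖₊ : ℝ≥0∞)) ^ r = 0 := by
          intro y
          rw [iMap, if_neg hs]
          simp [ENNReal.zero_rpow_of_pos hr0]
        refine le_trans (le_of_eq ?_) zero_le
        rw [lintegral_congr heq, lintegral_zero, zero_mul]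
    have step1 : (conical r (enn (iMap t f)) x) ^ r ≤ B * ENNReal.ofReal (E * t - t) := by
      rw [hconr]
      calc ∫⁻ s in Ioi (0:ℝ),
            (∫⁻ y in ball x s, ((‖iMap t f y s‖₊ : ℝ≥0∞)) ^ r) * ENNReal.ofReal (s ^ (-(n:ℝ)-1))
          ≤ ∫⁻ s in Ioi (0:ℝ), (Icc t (E * t)).indicator (fun _ => B) s :=
            lintegral_mono fun s => ptb s
        _ ≤ ∫⁻ s, (Icc t (E * t)).indicator (fun _ => B) s :=
            setLIntegral_le_lintegral _ _
        _ = B * volume (Icc t (E * t)) := by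
            rw [lintegral_indicator measurableSet_Icc, setLIntegral_const]
        _ = B * ENNReal.ofReal (E * t - t) := by rw [Real.volume_Icc]
    have step2 : B * ENNReal.ofReal (E * t - t)
        = (∫⁻ y in ball x (E * t), (‖f y‖₊ : ℝ≥0∞) ^ r)
          * ENNReal.ofReal ((E - 1) * (t^n)⁻¹) := by
      rw [hB, mul_assoc]
      congr 1
      rw [rpow_neg_nat ht n, ← ENNReal.ofReal_mul (by positivity)]
      congr 1
      have h1 : E * t - t = (E - 1) * t := by ring
      rw [h1, pow_succ]
      field_simp
    have step3 : (∫⁻ y in ball x (E * t), (‖f y‖₊ : ℝ≥0∞) ^ r)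
        ≤ ∑ v ∈ F, (ENNReal.ofReal (t^n) * c) * Av v x := by
      have hsub := cover' x
      calc (∫⁻ y in ball x (E * t), (‖f y‖₊ : ℝ≥0∞) ^ r)
          ≤ ∫⁻ y in ⋃ v ∈ F, ball (x + t • v) t, (‖f y‖₊ : ℝ≥0∞) ^ r :=
            lintegral_mono_set hsub
        _ = ∫⁻ y in ⋃ v : F, ball (x + t • (v:Rn n)) t, (‖f y‖₊ : ℝ≥0∞) ^ r := by
            have hUU : (⋃ v ∈ F, ball (x + t • v) t) = ⋃ v : F, ball (x + t • (v:Rn n)) t := by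
              ext y; simp
            rw [hUU]
        _ ≤ ∑' v : F, ∫⁻ y in ball (x + t • (v:Rn n)) t, (‖f y‖₊ : ℝ≥0∞) ^ r :=
            lintegral_iUnion_le _ _
        _ = ∑ v ∈ F, ∫⁻ y in ball (x + t • v) t, (‖f y‖₊ : ℝ≥0∞) ^ r := by
            rw [tsum_fintype]
            exact Finset.sum_coe_sort F
              (fun v => ∫⁻ y in ball (x + t • v) t, (‖f y‖₊ : ℝ≥0∞) ^ r)
        _ = ∑ v ∈ F, (ENNReal.ofReal (t^n) * c) * Av v x := by
            refine Finset.sum_congr rfl fun v _ => ?_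
            rw [hAv, ← mul_assoc, ENNReal.mul_inv_cancel hvolB.ne' hvolBfin, one_mul]
    calc (conical r (enn (iMap t f)) x) ^ r
        ≤ B * ENNReal.ofReal (E * t - t) := step1
      _ = (∫⁻ y in ball x (E * t), (‖f y‖₊ : ℝ≥0∞) ^ r)
          * ENNReal.ofReal ((E - 1) * (t^n)⁻¹) := step2
      _ ≤ (∑ v ∈ F, (ENNReal.ofReal (t^n) * c) * Av v x)
          * ENNReal.ofReal ((E - 1) * (t^n)⁻¹) := mul_le_mul_left step3 _
      _ = K₂ * ∑ v ∈ F, Av v x := by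
          rw [Finset.sum_mul, Finset.mul_sum]
          refine Finset.sum_congr rfl fun v _ => ?_
          rw [ENNReal.ofReal_mul (sub_nonneg.mpr (by rw [hE]; exact exp_one_pos'))]
          calc ENNReal.ofReal (t^n) * c * Av v x * (ENNReal.ofReal (E-1) * ENNReal.ofReal ((t^n)⁻¹))
              = (ENNReal.ofReal (E-1) * c) * Av v x
                  * (ENNReal.ofReal (t^n) * ENNReal.ofReal ((t^n)⁻¹)) := by ring
            _ = K₂ * Av v x := by
                rw [← ENNReal.ofReal_mul (by positivity), mul_inv_cancel₀ (by positivity),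
                  ENNReal.ofReal_one, mul_one, hK2]
  -- measurability of the averages
  have hfr : Measurable fun y : Rn n => (‖f y‖₊ : ℝ≥0∞) ^ r :=
    (hf.nnnorm.coe_nnreal_ennreal).pow_const r
  have hAvm : ∀ v : Rn n, Measurable fun x => Av v x := by
    intro v
    exact (measurable_const.mul ((mble_ballint hfr t).comp (measurable_id.add_const (t • v))))
  -- integrate
  have main : ∫⁻ x, (conical r (enn (iMap t f)) x) ^ p
      ≤ K₂ ^ (p/r) * N ^ (p/r) * N *
        ∫⁻ x, ((volume (ball x t))⁻¹ * ∫⁻ y in ball x t, (‖f y‖₊ : ℝ≥0∞) ^ r) ^ (p/r) := by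
    have hpt : ∀ x, (conical r (enn (iMap t f)) x) ^ p
        ≤ K₂ ^ (p/r) * N ^ (p/r) * ∑ v ∈ F, (Av v x) ^ (p/r) := by
      intro x
      have e1 : (conical r (enn (iMap t f)) x) ^ p
          = ((conical r (enn (iMap t f)) x) ^ r) ^ (p/r) := by
        rw [← ENNReal.rpow_mul, mul_div_cancel₀ p hr0.ne']
      rw [e1]
      calc ((conical r (enn (iMap t f)) x) ^ r) ^ (p/r)
          ≤ (K₂ * ∑ v ∈ F, Av v x) ^ (p/r) := ENNReal.rpow_le_rpow (key x) hq.le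
        _ = K₂ ^ (p/r) * (∑ v ∈ F, Av v x) ^ (p/r) := ENNReal.mul_rpow_of_nonneg _ _ hq.le
        _ ≤ K₂ ^ (p/r) * (N ^ (p/r) * ∑ v ∈ F, (Av v x) ^ (p/r)) :=
            mul_le_mul_right (sum_rpow_le F _ hq) _
        _ = K₂ ^ (p/r) * N ^ (p/r) * ∑ v ∈ F, (Av v x) ^ (p/r) := by rw [mul_assoc]
    calc ∫⁻ x, (conical r (enn (iMap t f)) x) ^ p
        ≤ ∫⁻ x, K₂ ^ (p/r) * N ^ (p/r) * ∑ v ∈ F, (Av v x) ^ (p/r) :=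
          lintegral_mono hpt
      _ = K₂ ^ (p/r) * N ^ (p/r) * ∫⁻ x, ∑ v ∈ F, (Av v x) ^ (p/r) :=
          lintegral_const_mul' _ _ (ENNReal.mul_ne_top
            (ENNReal.rpow_ne_top_of_nonneg hq.le hK2fin)
            (ENNReal.rpow_ne_top_of_nonneg hq.le hNfin))
      _ = K₂ ^ (p/r) * N ^ (p/r) * ∑ v ∈ F, ∫⁻ x, (Av v x) ^ (p/r) := by
          rw [lintegral_finset_sum' F (fun v _ => ((hAvm v).pow_const _).aemeasurable)]
      _ = K₂ ^ (p/r) * N ^ (p/r) * ∑ v ∈ F,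
            ∫⁻ x, ((volume (ball x t))⁻¹ * ∫⁻ y in ball x t, (‖f y‖₊ : ℝ≥0∞) ^ r) ^ (p/r) := by
          congr 1
          refine Finset.sum_congr rfl fun v _ => ?_
          have : ∀ x : Rn n, (Av v x) ^ (p/r) = (fun z : Rn n =>
              ((volume (ball z t))⁻¹ * ∫⁻ y in ball z t, (‖f y‖₊ : ℝ≥0∞) ^ r) ^ (p/r)) (x + t • v) := by
            intro x
            simp only [hAv]
            rw [vol_ball _ ht]
          rw [lintegral_congr this]
          exact lintegral_add_right_eq_self (fun z : Rn n =>
            ((volume (ball z t))⁻¹ * ∫⁻ y in ball z t, (‖f y‖₊ : ℝ≥0∞) ^ r) ^ (p/r)) (t • v)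
      _ = _ := by
          rw [Finset.sum_const, nsmul_eq_mul, ← mul_assoc, hN]
  -- conclude
  rw [tentNorm, sliceNorm]
  calc (∫⁻ x, (conical r (enn (iMap t f)) x) ^ p) ^ (1/p)
      ≤ ((K₂ ^ (p/r) * N ^ (p/r) * N) *
          ∫⁻ x, ((volume (ball x t))⁻¹ * ∫⁻ y in ball x t, (‖f y‖₊ : ℝ≥0∞) ^ r) ^ (p/r)) ^ (1/p) :=
        ENNReal.rpow_le_rpow main (by positivity)
    _ = _ := ENNReal.mul_rpow_of_nonneg _ _ (by positivity)

/-- the slice-space `(E^p_r)_t` is a retract of the tent space `T^p_r` via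
`i_t` and `π_t`, with bounds uniform in `t`. -/
theorem stmt12 (n : ℕ) (p r : ℝ) (hr : 1 ≤ r) (hp : 0 < p) :
    (∀ (t : ℝ), 0 < t → ∀ f : Rn n → ℝ, piMap t (iMap t f) = f) ∧
    (∃ C : ℝ≥0∞, 0 < C ∧ C ≠ ∞ ∧
      (∀ (t : ℝ), 0 < t → ∀ f : Rn n → ℝ, Measurable f →
        tentNorm p r (enn (iMap t f)) ≤ C * sliceNorm p r t f) ∧
      (∀ (t : ℝ), 0 < t → ∀ G : Rn n → ℝ → ℝ, Measurable (Function.uncurry G) →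
        sliceNorm p r t (piMap t G) ≤ C * tentNorm p r (enn G))) := by
  obtain ⟨C₁, hC₁fin, hC₁⟩ := ibound (n := n) hr hp
  set Cpi : ℝ≥0∞ :=
    ((volume (ball (0:Rn n) 1))⁻¹ * ENNReal.ofReal (Real.exp 1 ^ n)) ^ (1/r) with hCpi
  have hr0 : (0:ℝ) < r := lt_of_lt_of_le one_pos hr
  have hCpifin : Cpi ≠ ∞ := by
    rw [hCpi]
    exact ENNReal.rpow_ne_top_of_nonneg (by positivity)
      (ENNReal.mul_ne_top (ENNReal.inv_ne_top.mpr cn_pos.ne') ofReal_ne_top)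
  refine ⟨fun t ht f => part1 ht f, C₁ + Cpi + 1, ?_, ?_, ?_, ?_⟩
  · exact lt_of_lt_of_le zero_lt_one le_add_self
  · simp [ENNReal.add_ne_top, hC₁fin, hCpifin]
  · intro t ht f hf
    refine (hC₁ t ht f hf).trans (mul_le_mul_left ?_ _)
    calc C₁ ≤ C₁ + Cpi := le_self_add
      _ ≤ C₁ + Cpi + 1 := le_self_add
  · intro t ht G hG
    refine (pibound hr hp ht G hG).trans (mul_le_mul_left ?_ _)
    calc Cpi ≤ C₁ + Cpi := le_add_self
      _ ≤ C₁ + Cpi + 1 := le_self_add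
end
end

section
/- For the retraction maps one has the pointwise bounds: (⨍_{B(x,t)} |π_t(G)(y)|^r dy)^{1/r} ≤ C·A_r(G)(x) for all G on ℝ^{n+1}_+, and A_r(i_t(f))(x) ≤ C·(⨍_{B(x,et)} |f(y)|^r dy)^{1/r} for all locally r-integrable f on ℝⁿ, with constants C depending only on n and r (not on t). -/
open MeasureTheory Metric Set ENNReal
open scoped NNReal

noncomputable section

variable {n : ℕ}

/-! ### Auxiliary lemmas for `stmt13` -/

lemma jensen_weighted {α : Type*} [MeasurableSpace α] (μ : Measure α) {r : ℝ} (hr : 1 ≤ r)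
    {f w : α → ℝ≥0∞} (hf : AEMeasurable f μ) (hw : AEMeasurable w μ)
    (hw2 : ∫⁻ a, w a ∂μ ≤ 2) :
    (∫⁻ a, f a * w a ∂μ) ^ r ≤ 2 ^ r * ∫⁻ a, (f a) ^ r * w a ∂μ := by
  have hr0 : (0:ℝ) ≤ r := le_trans zero_le_one hr
  rcases hr.eq_or_lt with h | h
  · rw [← h]
    simp only [ENNReal.rpow_one]
    exact le_mul_of_one_le_left' one_le_two
  · have hq : r.HolderConjugate (Real.conjExponent r) := Real.HolderConjugate.conjExponent h
    set q := Real.conjExponent r with hqdef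
    have hrne : r ≠ 0 := hq.ne_zero
    have hqne : q ≠ 0 := hq.symm.ne_zero
    have key : ∀ a, f a * w a = (f a * (w a) ^ (1/r)) * (w a) ^ (1/q) := by
      intro a
      rw [mul_assoc, ← ENNReal.rpow_add_of_nonneg _ _ hq.one_div_nonneg hq.symm.one_div_nonneg]
      rw [show 1/r + 1/q = 1 by
        have := hq.inv_add_inv_eq_one
        rw [one_div, one_div]; linarith, ENNReal.rpow_one]
    have hf1 : AEMeasurable (fun a => f a * (w a) ^ (1/r)) μ := hf.mul (hw.pow_const _)
    have hg1 : AEMeasurable (fun a => (w a) ^ (1/q)) μ := hw.pow_const _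
    have H := ENNReal.lintegral_mul_le_Lp_mul_Lq μ hq hf1 hg1
    simp only [Pi.mul_apply] at H
    have Hrw : (∫⁻ a, (f a * (w a) ^ (1/r)) * (w a) ^ (1/q) ∂μ) = ∫⁻ a, f a * w a ∂μ := by
      congr 1; ext a; rw [← key a]
    have Hrw2 : (∫⁻ a, (f a * (w a) ^ (1/r)) ^ r ∂μ) = ∫⁻ a, (f a) ^ r * w a ∂μ := by
      congr 1; ext a
      rw [ENNReal.mul_rpow_of_nonneg _ _ hr0, ← ENNReal.rpow_mul,
        one_div, inv_mul_cancel₀ hrne, ENNReal.rpow_one]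
    have Hrw3 : (∫⁻ a, ((w a) ^ (1/q)) ^ q ∂μ) = ∫⁻ a, w a ∂μ := by
      congr 1; ext a
      rw [← ENNReal.rpow_mul, one_div, inv_mul_cancel₀ hqne, ENNReal.rpow_one]
    rw [Hrw, Hrw2, Hrw3] at H
    have h2q : (∫⁻ a, w a ∂μ) ^ (1/q) ≤ 2 := by
      calc (∫⁻ a, w a ∂μ) ^ (1/q) ≤ ((2:ℝ≥0∞) ^ q) ^ (1/q) := by
            apply ENNReal.rpow_le_rpow _ hq.symm.one_div_nonneg
            calc (∫⁻ a, w a ∂μ) ≤ 2 := hw2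
              _ = (2:ℝ≥0∞) ^ (1:ℝ) := (ENNReal.rpow_one 2).symm
              _ ≤ (2:ℝ≥0∞) ^ q := ENNReal.rpow_le_rpow_of_exponent_le one_le_two hq.symm.lt.le
        _ = 2 := by rw [← ENNReal.rpow_mul, mul_one_div, div_self hqne, ENNReal.rpow_one]
    calc (∫⁻ a, f a * w a ∂μ) ^ r
        ≤ ((∫⁻ a, (f a) ^ r * w a ∂μ) ^ (1/r) * 2) ^ r := by
          apply ENNReal.rpow_le_rpow _ hr0
          exact H.trans (mul_le_mul_right h2q _)
      _ = 2 ^ r * ∫⁻ a, (f a) ^ r * w a ∂μ := by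
          rw [ENNReal.mul_rpow_of_nonneg _ _ hr0, ← ENNReal.rpow_mul,
            one_div, inv_mul_cancel₀ hrne, ENNReal.rpow_one, mul_comm]

lemma vol_ball_eq (x : Rn n) {ρ : ℝ} (hρ : 0 < ρ) :
    volume (ball x ρ) = ENNReal.ofReal (ρ ^ n) * volume (ball (0 : Rn n) 1) := by
  have := Measure.addHaar_ball_of_pos (volume : Measure (Rn n)) x hρ
  rwa [finrank_euclideanSpace_fin] at this

lemma stmt13_part1 (n : ℕ) (r : ℝ) (hr : 1 ≤ r) :
    ∃ C : ℝ≥0∞, 0 < C ∧ C ≠ ∞ ∧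
      ∀ (t : ℝ), 0 < t → ∀ G : Rn n → ℝ → ℝ, Measurable (Function.uncurry G) →
        ∀ x : Rn n,
          ballAvg r (fun y => (‖piMap t G y‖₊ : ℝ≥0∞)) x t ≤ C * conical r (enn G) x := by
  have hr0 : (0:ℝ) ≤ r := le_trans zero_le_one hr
  have hrne : r ≠ 0 := by positivity
  set e := Real.exp 1 with he
  have he1 : 1 < e := by rw [he]; exact lt_of_lt_of_le one_lt_two (by
    have := Real.add_one_le_exp (1:ℝ); linarith)
  set B₁ : ℝ≥0∞ := volume (ball (0 : Rn n) 1) with hB₁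
  have hB₁0 : B₁ ≠ 0 := (measure_ball_pos volume _ one_pos).ne'
  have hB₁t : B₁ ≠ ∞ := measure_ball_lt_top.ne
  set K : ℝ≥0∞ := 2 ^ r * ENNReal.ofReal (e ^ n) * B₁⁻¹ with hK
  have hK0 : K ≠ 0 := by
    rw [hK]
    apply mul_ne_zero (mul_ne_zero _ _)
    · exact ENNReal.inv_ne_zero.mpr hB₁t
    · exact (ENNReal.rpow_pos (by norm_num) (by norm_num)).ne'
    · exact (ENNReal.ofReal_pos.mpr (by positivity)).ne'
  have hKt : K ≠ ∞ := by
    rw [hK]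
    apply ENNReal.mul_ne_top (ENNReal.mul_ne_top _ ENNReal.ofReal_ne_top)
      (ENNReal.inv_ne_top.mpr hB₁0)
    exact (ENNReal.rpow_lt_top_of_nonneg hr0 (by norm_num)).ne
  refine ⟨K ^ (1/r), ENNReal.rpow_pos (pos_iff_ne_zero.mpr hK0) hKt, ?_, ?_⟩
  · exact (ENNReal.rpow_lt_top_of_nonneg (by positivity) hKt).ne
  intro t ht G hG x
  have het : 0 < e * t := by positivity
  have htet : t ≤ e * t := le_mul_of_one_le_left ht.le he1.le
  -- the weight
  set w : ℝ → ℝ≥0∞ := fun s => ENNReal.ofReal s⁻¹ with hw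
  have hwm : Measurable w := measurable_inv.ennreal_ofReal
  have hw2 : ∫⁻ s in Ioc t (e * t), w s ≤ 2 := by
    calc ∫⁻ s in Ioc t (e * t), w s
        ≤ ∫⁻ _ in Ioc t (e * t), ENNReal.ofReal t⁻¹ := by
          refine setLIntegral_mono' measurableSet_Ioc fun s hs => ?_
          exact ENNReal.ofReal_le_ofReal (inv_anti₀ ht hs.1.le)
      _ = ENNReal.ofReal t⁻¹ * volume (Ioc t (e * t)) := setLIntegral_const _ _
      _ = ENNReal.ofReal t⁻¹ * ENNReal.ofReal (e * t - t) := by rw [Real.volume_Ioc]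
      _ = ENNReal.ofReal (t⁻¹ * (e * t - t)) := by
          rw [← ENNReal.ofReal_mul (by positivity)]
      _ = ENNReal.ofReal (e - 1) := by
          congr 1; field_simp
      _ ≤ 2 := by
          refine le_trans (ENNReal.ofReal_le_ofReal (show e - 1 ≤ (2:ℝ) by
            have := Real.exp_one_lt_d9; rw [he]; linarith)) ?_
          simp
  -- pointwise bound on piMap
  have hpoint : ∀ y : Rn n, (‖piMap t G y‖₊ : ℝ≥0∞) ≤
      ∫⁻ s in Ioc t (e * t), (‖G y s‖₊ : ℝ≥0∞) * w s := by
    intro y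
    refine le_trans (enorm_integral_le_lintegral_enorm _) ?_
    refine setLIntegral_mono' measurableSet_Ioc fun s hs => ?_
    have hs0 : 0 < s := lt_trans ht hs.1
    rw [div_eq_mul_inv, enorm_mul,
      Real.enorm_eq_ofReal (inv_nonneg.mpr hs0.le)]
    exact le_rfl
  -- measurability of slices
  have hGm : ∀ y : Rn n, Measurable fun s => (‖G y s‖₊ : ℝ≥0∞) := by
    intro y
    exact ((hG.comp measurable_prodMk_left).nnnorm).coe_nnreal_ennreal
  -- Jensen per point
  have hjensen : ∀ y : Rn n,
      ((‖piMap t G y‖₊ : ℝ≥0∞)) ^ r ≤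
        2 ^ r * ∫⁻ s in Ioc t (e * t), (‖G y s‖₊ : ℝ≥0∞) ^ r * w s := by
    intro y
    refine le_trans (ENNReal.rpow_le_rpow (hpoint y) hr0) ?_
    exact jensen_weighted _ hr (hGm y).aemeasurable hwm.aemeasurable hw2
  -- main integral estimate
  set I : ℝ≥0∞ := ∫⁻ s in Ioi (0:ℝ),
      (∫⁻ y in ball x s, (‖G y s‖₊ : ℝ≥0∞) ^ r) * ENNReal.ofReal (s ^ (-(n : ℝ) - 1)) with hI
  have hmain : ∫⁻ y in ball x t, ((‖piMap t G y‖₊ : ℝ≥0∞)) ^ r ≤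
      2 ^ r * (ENNReal.ofReal ((e * t) ^ n) * I) := by
    calc ∫⁻ y in ball x t, ((‖piMap t G y‖₊ : ℝ≥0∞)) ^ r
        ≤ ∫⁻ y in ball x t, 2 ^ r * ∫⁻ s in Ioc t (e * t),
            (‖G y s‖₊ : ℝ≥0∞) ^ r * w s := lintegral_mono fun y => hjensen y
      _ = 2 ^ r * ∫⁻ y in ball x t, ∫⁻ s in Ioc t (e * t),
            (‖G y s‖₊ : ℝ≥0∞) ^ r * w s :=
          lintegral_const_mul' _ _ (ENNReal.rpow_lt_top_of_nonneg hr0 (by norm_num)).ne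
      _ = 2 ^ r * ∫⁻ s in Ioc t (e * t), ∫⁻ y in ball x t,
            (‖G y s‖₊ : ℝ≥0∞) ^ r * w s := by
          congr 1
          refine lintegral_lintegral_swap ?_
          exact (((hG.comp (measurable_fst.prodMk measurable_snd)).nnnorm.coe_nnreal_ennreal.pow_const
            r).mul ((measurable_inv.comp measurable_snd).ennreal_ofReal)).aemeasurable
      _ = 2 ^ r * ∫⁻ s in Ioc t (e * t),
            (∫⁻ y in ball x t, (‖G y s‖₊ : ℝ≥0∞) ^ r) * w s := by
          congr 1
          refine lintegral_congr fun s => ?_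
          exact lintegral_mul_const' _ _ ENNReal.ofReal_ne_top
      _ ≤ 2 ^ r * ∫⁻ s in Ioc t (e * t), ENNReal.ofReal ((e * t) ^ n) *
            ((∫⁻ y in ball x s, (‖G y s‖₊ : ℝ≥0∞) ^ r) * ENNReal.ofReal (s ^ (-(n : ℝ) - 1))) := by
          refine mul_le_mul_right (setLIntegral_mono' measurableSet_Ioc fun s hs => ?_) _
          have hs0 : 0 < s := lt_trans ht hs.1
          have hball : (∫⁻ y in ball x t, (‖G y s‖₊ : ℝ≥0∞) ^ r) ≤
              ∫⁻ y in ball x s, (‖G y s‖₊ : ℝ≥0∞) ^ r :=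
            lintegral_mono_set (ball_subset_ball hs.1.le)
          have hwle : w s ≤ ENNReal.ofReal ((e * t) ^ n * s ^ (-(n : ℝ) - 1)) := by
            rw [hw]
            refine ENNReal.ofReal_le_ofReal ?_
            have h1 : s⁻¹ = s ^ (-(n : ℝ) - 1) * s ^ (n : ℝ) := by
              rw [← Real.rpow_add hs0, show -(n : ℝ) - 1 + n = -1 by ring,
                Real.rpow_neg_one]
            rw [h1]
            have h2 : s ^ (n : ℝ) ≤ (e * t) ^ (n : ℝ) :=
              Real.rpow_le_rpow hs0.le hs.2 (Nat.cast_nonneg n)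
            rw [Real.rpow_natCast (e*t) n] at h2
            calc s ^ (-(n : ℝ) - 1) * s ^ (n : ℝ)
                ≤ s ^ (-(n : ℝ) - 1) * (e * t) ^ n :=
                  mul_le_mul_of_nonneg_left h2 (Real.rpow_nonneg hs0.le _)
              _ = (e * t) ^ n * s ^ (-(n : ℝ) - 1) := mul_comm _ _
          calc (∫⁻ y in ball x t, (‖G y s‖₊ : ℝ≥0∞) ^ r) * w s
              ≤ (∫⁻ y in ball x s, (‖G y s‖₊ : ℝ≥0∞) ^ r) *
                  ENNReal.ofReal ((e * t) ^ n * s ^ (-(n : ℝ) - 1)) :=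
                mul_le_mul' hball hwle
            _ = ENNReal.ofReal ((e * t) ^ n) *
                  ((∫⁻ y in ball x s, (‖G y s‖₊ : ℝ≥0∞) ^ r) *
                    ENNReal.ofReal (s ^ (-(n : ℝ) - 1))) := by
                rw [ENNReal.ofReal_mul (by positivity)]; ring
      _ = 2 ^ r * (ENNReal.ofReal ((e * t) ^ n) * ∫⁻ s in Ioc t (e * t),
            (∫⁻ y in ball x s, (‖G y s‖₊ : ℝ≥0∞) ^ r) * ENNReal.ofReal (s ^ (-(n : ℝ) - 1))) := by
          rw [lintegral_const_mul' _ _ ENNReal.ofReal_ne_top]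
      _ ≤ 2 ^ r * (ENNReal.ofReal ((e * t) ^ n) * I) := by
          refine mul_le_mul_right (mul_le_mul_right ?_ _) _
          rw [hI]
          exact lintegral_mono_set fun s hs => lt_trans ht hs.1
  -- volume algebra
  have hvol : volume (ball x t) = ENNReal.ofReal (t ^ n) * B₁ := vol_ball_eq x ht
  have htn0 : ENNReal.ofReal (t ^ n) ≠ 0 := (ENNReal.ofReal_pos.mpr (by positivity)).ne'
  have hvK : (volume (ball x t))⁻¹ * (2 ^ r * (ENNReal.ofReal ((e * t) ^ n) * I)) = K * I := by
    rw [hvol, ENNReal.mul_inv (Or.inl htn0) (Or.inl ENNReal.ofReal_ne_top),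
      mul_pow, ENNReal.ofReal_mul (by positivity), hK]
    have : (ENNReal.ofReal (t ^ n))⁻¹ * B₁⁻¹ *
        (2 ^ r * (ENNReal.ofReal (e ^ n) * ENNReal.ofReal (t ^ n) * I)) =
        ((ENNReal.ofReal (t ^ n))⁻¹ * ENNReal.ofReal (t ^ n)) *
          (2 ^ r * ENNReal.ofReal (e ^ n) * B₁⁻¹ * I) := by ring
    rw [this, ENNReal.inv_mul_cancel htn0 ENNReal.ofReal_ne_top, one_mul]
  -- conclude
  have hconical : conical r (enn G) x = I ^ (1/r) := by simp only [conical, enn]; rfl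
  rw [ballAvg, hconical]
  calc ((volume (ball x t))⁻¹ * ∫⁻ y in ball x t, ((‖piMap t G y‖₊ : ℝ≥0∞)) ^ r) ^ (1/r)
      ≤ ((volume (ball x t))⁻¹ * (2 ^ r * (ENNReal.ofReal ((e * t) ^ n) * I))) ^ (1/r) :=
        ENNReal.rpow_le_rpow (mul_le_mul_right hmain _) (by positivity)
    _ = (K * I) ^ (1/r) := by rw [hvK]
    _ = K ^ (1/r) * I ^ (1/r) := ENNReal.mul_rpow_of_nonneg _ _ (by positivity)

lemma stmt13_part2 (n : ℕ) (r : ℝ) (hr : 1 ≤ r) :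
    ∃ C : ℝ≥0∞, 0 < C ∧ C ≠ ∞ ∧
      ∀ (t : ℝ), 0 < t → ∀ f : Rn n → ℝ, Measurable f → ∀ x : Rn n,
        conical r (enn (iMap t f)) x ≤
          C * ballAvg r (fun y => (‖f y‖₊ : ℝ≥0∞)) x (Real.exp 1 * t) := by
  have hr0 : (0:ℝ) ≤ r := le_trans zero_le_one hr
  have hrpos : (0:ℝ) < r := lt_of_lt_of_le zero_lt_one hr
  set e := Real.exp 1 with he
  have he1 : 1 < e := by rw [he]; exact lt_of_lt_of_le one_lt_two (by
    have := Real.add_one_le_exp (1:ℝ); linarith)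
  have he0 : 0 < e := lt_trans zero_lt_one he1
  set B₁ : ℝ≥0∞ := volume (ball (0 : Rn n) 1) with hB₁
  have hB₁0 : B₁ ≠ 0 := (measure_ball_pos volume _ one_pos).ne'
  have hB₁t : B₁ ≠ ∞ := measure_ball_lt_top.ne
  set K : ℝ≥0∞ := ENNReal.ofReal ((e - 1) * e ^ n) * B₁ with hK
  have hK0 : K ≠ 0 := by
    rw [hK]
    exact mul_ne_zero (ENNReal.ofReal_pos.mpr (mul_pos (by linarith) (pow_pos he0 n))).ne' hB₁0
  have hKt : K ≠ ∞ := ENNReal.mul_ne_top ENNReal.ofReal_ne_top hB₁t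
  refine ⟨K ^ (1/r), ENNReal.rpow_pos (pos_iff_ne_zero.mpr hK0) hKt, ?_, ?_⟩
  · exact (ENNReal.rpow_lt_top_of_nonneg (by positivity) hKt).ne
  intro t ht f hf x
  have het : 0 < e * t := by positivity
  have htet : t ≤ e * t := le_mul_of_one_le_left ht.le he1.le
  set J : ℝ≥0∞ := ∫⁻ y in ball x (e * t), (‖f y‖₊ : ℝ≥0∞) ^ r with hJ
  set c : ℝ≥0∞ := J * ENNReal.ofReal (t ^ (-(n : ℝ) - 1)) with hc
  -- pointwise bound
  have hpt : ∀ s ∈ Ioi (0:ℝ),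
      (∫⁻ y in ball x s, (‖iMap t f y s‖₊ : ℝ≥0∞) ^ r) * ENNReal.ofReal (s ^ (-(n : ℝ) - 1))
        ≤ (Icc t (e * t)).indicator (fun _ => c) s := by
    intro s _
    by_cases hs : s ∈ Icc t (e * t)
    · rw [indicator_of_mem hs, hc]
      have h1 : ∀ y : Rn n, (‖iMap t f y s‖₊ : ℝ≥0∞) ^ r = (‖f y‖₊ : ℝ≥0∞) ^ r := by
        intro y; rw [iMap, if_pos hs]
      have h2 : (∫⁻ y in ball x s, (‖iMap t f y s‖₊ : ℝ≥0∞) ^ r) ≤ J := by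
        rw [lintegral_congr fun y => h1 y, hJ]
        exact lintegral_mono_set (ball_subset_ball hs.2)
      have h3 : ENNReal.ofReal (s ^ (-(n : ℝ) - 1)) ≤ ENNReal.ofReal (t ^ (-(n : ℝ) - 1)) := by
        refine ENNReal.ofReal_le_ofReal ?_
        refine Real.rpow_le_rpow_of_nonpos ht hs.1 ?_
        have : (0:ℝ) ≤ (n:ℝ) := Nat.cast_nonneg n
        linarith
      exact mul_le_mul' h2 h3
    · rw [indicator_of_notMem hs]
      have h1 : ∀ y : Rn n, (‖iMap t f y s‖₊ : ℝ≥0∞) ^ r = 0 := by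
        intro y
        rw [iMap, if_neg hs]
        simp [ENNReal.zero_rpow_of_pos hrpos]
      rw [lintegral_congr fun y => h1 y]
      simp
  -- conclude
  have hcon : conical r (enn (iMap t f)) x =
      (∫⁻ s in Ioi (0:ℝ), (∫⁻ y in ball x s, (‖iMap t f y s‖₊ : ℝ≥0∞) ^ r) *
        ENNReal.ofReal (s ^ (-(n : ℝ) - 1))) ^ (1/r) := by
    simp only [conical, enn]
  have hint : (∫⁻ s in Ioi (0:ℝ), (∫⁻ y in ball x s, (‖iMap t f y s‖₊ : ℝ≥0∞) ^ r) *
      ENNReal.ofReal (s ^ (-(n : ℝ) - 1))) ≤ c * ENNReal.ofReal (e * t - t) := by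
    calc (∫⁻ s in Ioi (0:ℝ), (∫⁻ y in ball x s, (‖iMap t f y s‖₊ : ℝ≥0∞) ^ r) *
          ENNReal.ofReal (s ^ (-(n : ℝ) - 1)))
        ≤ ∫⁻ s in Ioi (0:ℝ), (Icc t (e * t)).indicator (fun _ => c) s :=
          setLIntegral_mono' measurableSet_Ioi hpt
      _ ≤ ∫⁻ s, (Icc t (e * t)).indicator (fun _ => c) s := setLIntegral_le_lintegral _ _
      _ = c * volume (Icc t (e * t)) := by
          rw [lintegral_indicator measurableSet_Icc, setLIntegral_const]
      _ = c * ENNReal.ofReal (e * t - t) := by rw [Real.volume_Icc]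
  -- algebra
  have hre : t ^ (-(n:ℝ)-1) * (e * t - t) = (e-1) * e^n * (((e*t))^n)⁻¹ := by
    have h1 : t ^ (-(n:ℝ)-1) = (t ^ (n+1 : ℕ))⁻¹ := by
      rw [show (-(n:ℝ)-1) = -((n+1 : ℕ):ℝ) by push_cast; ring, Real.rpow_neg ht.le,
        Real.rpow_natCast]
    rw [h1, mul_pow]
    have ht0 : t ≠ 0 := ht.ne'
    have he0' : e ≠ 0 := he0.ne'
    field_simp
    ring
  have hKv : ENNReal.ofReal (t ^ (-(n : ℝ) - 1)) * ENNReal.ofReal (e * t - t) =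
      K * (volume (ball x (e * t)))⁻¹ := by
    have h0 : ENNReal.ofReal ((e * t) ^ n) ≠ 0 := (ENNReal.ofReal_pos.mpr (by positivity)).ne'
    calc ENNReal.ofReal (t ^ (-(n : ℝ) - 1)) * ENNReal.ofReal (e * t - t)
        = ENNReal.ofReal ((e-1) * e^n * (((e*t))^n)⁻¹) := by
          rw [← ENNReal.ofReal_mul (Real.rpow_nonneg ht.le _), hre]
      _ = ENNReal.ofReal ((e-1) * e^n) * ENNReal.ofReal ((((e*t))^n)⁻¹) :=
          ENNReal.ofReal_mul (mul_pos (by linarith) (pow_pos he0 n)).le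
      _ = K * (volume (ball x (e * t)))⁻¹ := by
          rw [vol_ball_eq x het, ENNReal.mul_inv (Or.inl h0) (Or.inl ENNReal.ofReal_ne_top),
            ENNReal.ofReal_inv_of_pos (by positivity), hK]
          have : ENNReal.ofReal ((e-1) * e^n) * B₁ *
              ((ENNReal.ofReal ((e*t)^n))⁻¹ * B₁⁻¹) =
              (B₁ * B₁⁻¹) * (ENNReal.ofReal ((e-1) * e^n) * (ENNReal.ofReal ((e*t)^n))⁻¹) := by
            ring
          rw [this, ENNReal.mul_inv_cancel hB₁0 hB₁t, one_mul]
  rw [hcon, ballAvg]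
  calc (∫⁻ s in Ioi (0:ℝ), (∫⁻ y in ball x s, (‖iMap t f y s‖₊ : ℝ≥0∞) ^ r) *
        ENNReal.ofReal (s ^ (-(n : ℝ) - 1))) ^ (1/r)
      ≤ (c * ENNReal.ofReal (e * t - t)) ^ (1/r) :=
        ENNReal.rpow_le_rpow hint (by positivity)
    _ = (K * ((volume (ball x (e * t)))⁻¹ * J)) ^ (1/r) := by
        rw [hc, mul_assoc, hKv]; ring_nf
    _ = K ^ (1/r) * ((volume (ball x (e * t)))⁻¹ *
          ∫⁻ y in ball x (e * t), (‖f y‖₊ : ℝ≥0∞) ^ r) ^ (1/r) := by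
        rw [ENNReal.mul_rpow_of_nonneg _ _ (by positivity), hJ]

/-- pointwise bounds for the retraction maps `π_t` and `i_t`,
with constants independent of `t`. -/
theorem stmt13 (n : ℕ) (r : ℝ) (hr : 1 ≤ r) :
    ∃ C : ℝ≥0∞, 0 < C ∧ C ≠ ∞ ∧
      (∀ (t : ℝ), 0 < t → ∀ G : Rn n → ℝ → ℝ, Measurable (Function.uncurry G) →
        ∀ x : Rn n,
          ballAvg r (fun y => (‖piMap t G y‖₊ : ℝ≥0∞)) x t ≤ C * conical r (enn G) x) ∧
      (∀ (t : ℝ), 0 < t → ∀ f : Rn n → ℝ, Measurable f → ∀ x : Rn n,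
        conical r (enn (iMap t f)) x ≤
          C * ballAvg r (fun y => (‖f y‖₊ : ℝ≥0∞)) x (Real.exp 1 * t)) := by
  obtain ⟨C₁, hC₁0, hC₁t, h1⟩ := stmt13_part1 n r hr
  obtain ⟨C₂, hC₂0, hC₂t, h2⟩ := stmt13_part2 n r hr
  refine ⟨C₁ ⊔ C₂, lt_sup_iff.mpr (Or.inl hC₁0), ?_, ?_, ?_⟩
  · exact (max_lt (lt_top_iff_ne_top.mpr hC₁t) (lt_top_iff_ne_top.mpr hC₂t)).ne
  · intro t ht G hG x
    exact (h1 t ht G hG x).trans (mul_le_mul_left le_sup_left _)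
  · intro t ht f hf x
    exact (h2 t ht f hf x).trans (mul_le_mul_left le_sup_right _)
end
end
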